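/- arXiv:2406.03288 — 15 statements merged into one kernel-verified Lean document; each statement's English description precedes it below -/
import Mathlib

section
/- Aggregating balance condition, sufficiency (Theorem 1). Suppose for each n = 1, …, N the trajectory balance condition holds for (pFₙ, pBₙ, Rₙ), and the aggregating balance condition holds for the pairs (pF₁,pB₁), …, (pF_N,pB_N) together with (pF, pB). Then the marginal of pF over terminal states satisfies p_T(x) = (∏_{n=1}^N Rₙ(x)) / (Σ_{y∈𝒳} ∏_{n=1}^N Rₙ(y)) for all x ∈ 𝒳. -/
open Finset

/-- Aggregating balance condition, sufficiency (Theorem 1). -/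
theorem aggregating_balance_sufficiency
    {T X : Type} [Fintype T] [Fintype X] [Nonempty T] [Nonempty X] [DecidableEq X]
    (term : T → X) (hsurj : Function.Surjective term)
    (N : ℕ) (pFn pBn : Fin N → T → ℝ) (Rn : Fin N → X → ℝ)
    (pF pB : T → ℝ)
    (hpFn_pos : ∀ n τ, 0 < pFn n τ) (hpFn_sum : ∀ n, ∑ τ, pFn n τ = 1)
    (hpBn_pos : ∀ n τ, 0 < pBn n τ)
    (hpBn_sum : ∀ n x, ∑ τ ∈ univ.filter (fun τ => term τ = x), pBn n τ = 1)
    (hRn_pos : ∀ n x, 0 < Rn n x)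
    (hpF_pos : ∀ τ, 0 < pF τ) (hpF_sum : ∑ τ, pF τ = 1)
    (hpB_pos : ∀ τ, 0 < pB τ)
    (hpB_sum : ∀ x, ∑ τ ∈ univ.filter (fun τ => term τ = x), pB τ = 1)
    (hTB : ∀ n, ∃ Z > (0 : ℝ), ∀ τ, Z * pFn n τ = Rn n (term τ) * pBn n τ)
    (hAB : ∀ τ τ', pF τ * pB τ' * ∏ n, (pBn n τ * pFn n τ') =
      pB τ * pF τ' * ∏ n, (pFn n τ * pBn n τ')) :
    ∀ x, ∑ τ ∈ univ.filter (fun τ => term τ = x), pF τ =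
      (∏ n, Rn n x) / ∑ y, ∏ n, Rn n y := by
  choose Z hZpos hZ using hTB
  have hRprod_pos : ∀ x, (0:ℝ) < ∏ n, Rn n x := fun x =>
    Finset.prod_pos fun n _ => hRn_pos n x
  -- key pointwise identity
  have key : ∀ τ τ', pF τ * pB τ' * ∏ n, Rn n (term τ') =
      pB τ * pF τ' * ∏ n, Rn n (term τ) := by
    intro τ τ'
    have hP : (0:ℝ) < ∏ n, (pBn n τ * pBn n τ') :=
      Finset.prod_pos fun n _ => mul_pos (hpBn_pos n τ) (hpBn_pos n τ')
    have e1 : ∏ n, (Z n * (pBn n τ * pFn n τ')) =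
        (∏ n, Rn n (term τ')) * ∏ n, (pBn n τ * pBn n τ') := by
      rw [← Finset.prod_mul_distrib]
      refine Finset.prod_congr rfl fun n _ => ?_
      linear_combination pBn n τ * hZ n τ'
    have e2 : ∏ n, (Z n * (pFn n τ * pBn n τ')) =
        (∏ n, Rn n (term τ)) * ∏ n, (pBn n τ * pBn n τ') := by
      rw [← Finset.prod_mul_distrib]
      refine Finset.prod_congr rfl fun n _ => ?_
      linear_combination pBn n τ' * hZ n τ
    have d1 : ∏ n, (Z n * (pBn n τ * pFn n τ')) =
        (∏ n, Z n) * ∏ n, (pBn n τ * pFn n τ') := Finset.prod_mul_distrib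
    have d2 : ∏ n, (Z n * (pFn n τ * pBn n τ')) =
        (∏ n, Z n) * ∏ n, (pFn n τ * pBn n τ') := Finset.prod_mul_distrib
    have h2 : (pF τ * pB τ' * ∏ n, Rn n (term τ')) * ∏ n, (pBn n τ * pBn n τ') =
        (pB τ * pF τ' * ∏ n, Rn n (term τ)) * ∏ n, (pBn n τ * pBn n τ') := by
      calc (pF τ * pB τ' * ∏ n, Rn n (term τ')) * ∏ n, (pBn n τ * pBn n τ')
          = pF τ * pB τ' * ∏ n, (Z n * (pBn n τ * pFn n τ')) := by rw [e1]; ring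
        _ = (∏ n, Z n) * (pF τ * pB τ' * ∏ n, (pBn n τ * pFn n τ')) := by
            rw [d1]; ring
        _ = (∏ n, Z n) * (pB τ * pF τ' * ∏ n, (pFn n τ * pBn n τ')) := by
            rw [hAB τ τ']
        _ = pB τ * pF τ' * ∏ n, (Z n * (pFn n τ * pBn n τ')) := by
            rw [d2]; ring
        _ = (pB τ * pF τ' * ∏ n, Rn n (term τ)) * ∏ n, (pBn n τ * pBn n τ') := by
            rw [e2]; ring
    exact mul_right_cancel₀ hP.ne' h2
  obtain ⟨τ₀⟩ := ‹Nonempty T›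
  set c : ℝ := pF τ₀ / (pB τ₀ * ∏ n, Rn n (term τ₀)) with hc
  have hden : pB τ₀ * ∏ n, Rn n (term τ₀) ≠ 0 :=
    (mul_pos (hpB_pos τ₀) (hRprod_pos (term τ₀))).ne'
  have hpFeq : ∀ τ, pF τ = c * (pB τ * ∏ n, Rn n (term τ)) := by
    intro τ
    have h := key τ τ₀
    rw [hc]
    field_simp
    have hP0 := (hRprod_pos (term τ₀)).ne'
    have hB0 := (hpB_pos τ₀).ne'
    field_simp
    linear_combination h
  have hsum : ∀ x, ∑ τ ∈ univ.filter (fun τ => term τ = x), pF τ =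
      c * ∏ n, Rn n x := by
    intro x
    have : ∑ τ ∈ univ.filter (fun τ => term τ = x), pF τ =
        ∑ τ ∈ univ.filter (fun τ => term τ = x), c * (∏ n, Rn n x) * pB τ := by
      refine Finset.sum_congr rfl fun τ hτ => ?_
      have hx : term τ = x := (Finset.mem_filter.mp hτ).2
      rw [hpFeq τ, hx]; ring
    rw [this, ← Finset.mul_sum, hpB_sum x, mul_one]
  have hone : (1:ℝ) = c * ∑ y, ∏ n, Rn n y := by
    rw [← hpF_sum, ← Finset.sum_fiberwise univ term pF]
    rw [Finset.mul_sum]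
    refine Finset.sum_congr rfl fun x _ => ?_
    rw [← hsum x]
  have hS : (0:ℝ) < ∑ y, ∏ n, Rn n y :=
    Finset.sum_pos (fun y _ => hRprod_pos y) Finset.univ_nonempty
  intro x
  rw [hsum x, eq_div_iff hS.ne']
  linear_combination (∏ n, Rn n x) * hone.symm
end

section
/- Aggregating balance condition, necessity (Theorem 1, converse direction). Suppose for each n = 1, …, N the trajectory balance condition holds for (pFₙ, pBₙ, Rₙ), and the trajectory balance condition also holds for (pF, pB, R) where R(x) = ∏_{n=1}^N Rₙ(x). Then the aggregating balance condition holds for (pF₁,pB₁), …, (pF_N,pB_N) together with (pF, pB). -/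
open Finset

/-- Aggregating balance condition, necessity (Theorem 1, converse direction). -/
theorem aggregating_balance_necessity
    {T X : Type} [Fintype T] [Fintype X] [Nonempty T] [Nonempty X] [DecidableEq X]
    (term : T → X) (hsurj : Function.Surjective term)
    (N : ℕ) (pFn pBn : Fin N → T → ℝ) (Rn : Fin N → X → ℝ)
    (pF pB : T → ℝ)
    (hpFn_pos : ∀ n τ, 0 < pFn n τ) (hpFn_sum : ∀ n, ∑ τ, pFn n τ = 1)
    (hpBn_pos : ∀ n τ, 0 < pBn n τ)
    (hpBn_sum : ∀ n x, ∑ τ ∈ univ.filter (fun τ => term τ = x), pBn n τ = 1)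
    (hRn_pos : ∀ n x, 0 < Rn n x)
    (hpF_pos : ∀ τ, 0 < pF τ) (hpF_sum : ∑ τ, pF τ = 1)
    (hpB_pos : ∀ τ, 0 < pB τ)
    (hpB_sum : ∀ x, ∑ τ ∈ univ.filter (fun τ => term τ = x), pB τ = 1)
    (hTBn : ∀ n, ∃ Z > (0 : ℝ), ∀ τ, Z * pFn n τ = Rn n (term τ) * pBn n τ)
    (hTB : ∃ Z > (0 : ℝ), ∀ τ, Z * pF τ = (∏ n, Rn n (term τ)) * pB τ) :
    ∀ τ τ', pF τ * pB τ' * ∏ n, (pBn n τ * pFn n τ') =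
      pB τ * pF τ' * ∏ n, (pFn n τ * pBn n τ') := by
  intro τ τ'
  obtain ⟨Z, hZ, hTB⟩ := hTB
  choose Zn hZnpos hZn using hTBn
  have hZprod : (0 : ℝ) < ∏ n, Zn n := Finset.prod_pos fun n _ => hZnpos n
  apply mul_left_cancel₀ (a := Z * ∏ n, Zn n) (by positivity)
  have key : ∀ σ σ', Z * (∏ n, Zn n) * (pF σ * pB σ' * ∏ n, (pBn n σ * pFn n σ')) =
      (pB σ * pB σ') * ∏ n, ((Rn n (term σ) * Rn n (term σ')) * (pBn n σ * pBn n σ')) := by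
    intro σ σ'
    have h1 : (∏ n, Zn n) * ∏ n, (pBn n σ * pFn n σ') =
        ∏ n, (Rn n (term σ') * (pBn n σ * pBn n σ')) := by
      rw [← Finset.prod_mul_distrib]
      refine Finset.prod_congr rfl fun n _ => ?_
      rw [mul_left_comm, hZn n σ']; ring
    calc Z * (∏ n, Zn n) * (pF σ * pB σ' * ∏ n, (pBn n σ * pFn n σ'))
        = (Z * pF σ) * pB σ' * ((∏ n, Zn n) * ∏ n, (pBn n σ * pFn n σ')) := by ring
      _ = ((∏ n, Rn n (term σ)) * pB σ) * pB σ' *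
            ∏ n, (Rn n (term σ') * (pBn n σ * pBn n σ')) := by rw [hTB σ, h1]
      _ = (pB σ * pB σ') * ∏ n, ((Rn n (term σ) * Rn n (term σ')) * (pBn n σ * pBn n σ')) := by
          simp only [Finset.prod_mul_distrib]; ring
  have hgoalR : pB τ * pF τ' * ∏ n, (pFn n τ * pBn n τ') =
      pF τ' * pB τ * ∏ n, (pBn n τ' * pFn n τ) := by
    rw [mul_comm (pB τ)]
    congr 1
    exact Finset.prod_congr rfl fun n _ => mul_comm _ _
  rw [hgoalR, key τ τ', key τ' τ, mul_comm (pB τ') (pB τ)]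
  congr 1
  exact Finset.prod_congr rfl fun n _ => by ring
end

section
/- Influence of local failures (Theorem 2). For n = 1, …, N let πₙ(x) = Rₙ(x)/Σ_{y∈𝒳} Rₙ(y), and suppose there are αₙ ∈ (0,1) and βₙ > 0 such that (1 − αₙ)·pBₙ(τ)·πₙ(term(τ)) ≤ pFₙ(τ) ≤ (1 + βₙ)·pBₙ(τ)·πₙ(term(τ)) for all τ ∈ 𝒯. Let pB be any backward policy on (𝒯, 𝒳, term). Define u(x) = ∏_{n=1}^N πₙ(x) and π(x) = u(x)/Σ_{y} u(y), and define v(x) = Σ_{τ : term(τ)=x} pB(τ)·∏_{n=1}^N pFₙ(τ)/pBₙ(τ) and π̂(x) = v(x)/Σ_{y} v(y). Then the Jeffrey divergence satisfies D_J(π, π̂) := Σ_{x∈𝒳} π(x)·log(π(x)/π̂(x)) + Σ_{x∈𝒳} π̂(x)·log(π̂(x)/π(x)) ≤ Σ_{n=1}^N log((1 + βₙ)/(1 − αₙ)). -/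
open Finset

/-- Influence of local failures (Theorem 2). -/
theorem influence_of_local_failures
    {T X : Type} [Fintype T] [Fintype X] [Nonempty T] [Nonempty X] [DecidableEq X]
    (term : T → X) (hsurj : Function.Surjective term)
    (N : ℕ) (pFn pBn : Fin N → T → ℝ) (Rn : Fin N → X → ℝ)
    (hpFn_pos : ∀ n τ, 0 < pFn n τ) (hpFn_sum : ∀ n, ∑ τ, pFn n τ = 1)
    (hpBn_pos : ∀ n τ, 0 < pBn n τ)
    (hpBn_sum : ∀ n x, ∑ τ ∈ univ.filter (fun τ => term τ = x), pBn n τ = 1)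
    (hRn_pos : ∀ n x, 0 < Rn n x)
    (pB : T → ℝ) (hpB_pos : ∀ τ, 0 < pB τ)
    (hpB_sum : ∀ x, ∑ τ ∈ univ.filter (fun τ => term τ = x), pB τ = 1)
    (α β : Fin N → ℝ) (hα : ∀ n, α n ∈ Set.Ioo (0 : ℝ) 1) (hβ : ∀ n, 0 < β n)
    (piL : Fin N → X → ℝ) (hpiL : ∀ n x, piL n x = Rn n x / ∑ y, Rn n y)
    (hlower : ∀ n τ, (1 - α n) * (pBn n τ * piL n (term τ)) ≤ pFn n τ)
    (hupper : ∀ n τ, pFn n τ ≤ (1 + β n) * (pBn n τ * piL n (term τ)))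
    (u : X → ℝ) (hu : ∀ x, u x = ∏ n, piL n x)
    (piG : X → ℝ) (hpiG : ∀ x, piG x = u x / ∑ y, u y)
    (v : X → ℝ)
    (hv : ∀ x, v x = ∑ τ ∈ univ.filter (fun τ => term τ = x),
      pB τ * ∏ n, pFn n τ / pBn n τ)
    (piH : X → ℝ) (hpiH : ∀ x, piH x = v x / ∑ y, v y) :
    (∑ x, piG x * Real.log (piG x / piH x)) +
      (∑ x, piH x * Real.log (piH x / piG x)) ≤
        ∑ n, Real.log ((1 + β n) / (1 - α n)) := by
  set A := ∏ n, (1 - α n) with hA_def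
  set B := ∏ n, (1 + β n) with hB_def
  have hA : 0 < A := Finset.prod_pos (fun n _ => by have := (hα n).2; linarith)
  have hB : 0 < B := Finset.prod_pos (fun n _ => by have := hβ n; linarith)
  have hRsum : ∀ n : Fin N, 0 < ∑ y, Rn n y :=
    fun n => Finset.sum_pos (fun y _ => hRn_pos n y) univ_nonempty
  have hpiL_pos : ∀ n x, 0 < piL n x := fun n x => by
    rw [hpiL]; exact div_pos (hRn_pos n x) (hRsum n)
  have hu_pos : ∀ x, 0 < u x := fun x => by
    rw [hu]; exact Finset.prod_pos (fun n _ => hpiL_pos n x)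
  -- bounds on the products over n
  have hprod_upper : ∀ τ, ∏ n, pFn n τ / pBn n τ ≤ B * u (term τ) := by
    intro τ
    have h1 : ∏ n, pFn n τ / pBn n τ ≤ ∏ n, ((1 + β n) * piL n (term τ)) := by
      apply Finset.prod_le_prod
      · intro n _; exact (div_pos (hpFn_pos n τ) (hpBn_pos n τ)).le
      · intro n _
        rw [div_le_iff₀ (hpBn_pos n τ)]
        calc pFn n τ ≤ (1 + β n) * (pBn n τ * piL n (term τ)) := hupper n τ
          _ = (1 + β n) * piL n (term τ) * pBn n τ := by ring
    calc ∏ n, pFn n τ / pBn n τ ≤ ∏ n, ((1 + β n) * piL n (term τ)) := h1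
      _ = B * u (term τ) := by rw [Finset.prod_mul_distrib, hu]
  have hprod_lower : ∀ τ, A * u (term τ) ≤ ∏ n, pFn n τ / pBn n τ := by
    intro τ
    have h1 : ∏ n, ((1 - α n) * piL n (term τ)) ≤ ∏ n, pFn n τ / pBn n τ := by
      apply Finset.prod_le_prod
      · intro n _
        have h2 := (hα n).2
        exact mul_nonneg (by linarith) (hpiL_pos n (term τ)).le
      · intro n _
        rw [le_div_iff₀ (hpBn_pos n τ)]
        calc (1 - α n) * piL n (term τ) * pBn n τ
            = (1 - α n) * (pBn n τ * piL n (term τ)) := by ring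
          _ ≤ pFn n τ := hlower n τ
    calc A * u (term τ) = ∏ n, ((1 - α n) * piL n (term τ)) := by
          rw [Finset.prod_mul_distrib, hu]
      _ ≤ ∏ n, pFn n τ / pBn n τ := h1
  -- bounds on v
  have hv_upper : ∀ x, v x ≤ B * u x := by
    intro x
    rw [hv]
    calc ∑ τ ∈ univ.filter (fun τ => term τ = x), pB τ * ∏ n, pFn n τ / pBn n τ
        ≤ ∑ τ ∈ univ.filter (fun τ => term τ = x), pB τ * (B * u x) := by
          apply Finset.sum_le_sum
          intro τ hτ
          have hx : term τ = x := (Finset.mem_filter.mp hτ).2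
          have h := hprod_upper τ
          rw [hx] at h
          exact mul_le_mul_of_nonneg_left h (hpB_pos τ).le
      _ = (∑ τ ∈ univ.filter (fun τ => term τ = x), pB τ) * (B * u x) := by
          rw [Finset.sum_mul]
      _ = B * u x := by rw [hpB_sum x, one_mul]
  have hv_lower : ∀ x, A * u x ≤ v x := by
    intro x
    rw [hv]
    calc A * u x = (∑ τ ∈ univ.filter (fun τ => term τ = x), pB τ) * (A * u x) := by
          rw [hpB_sum x, one_mul]
      _ = ∑ τ ∈ univ.filter (fun τ => term τ = x), pB τ * (A * u x) := by
          rw [Finset.sum_mul]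
      _ ≤ ∑ τ ∈ univ.filter (fun τ => term τ = x), pB τ * ∏ n, pFn n τ / pBn n τ := by
          apply Finset.sum_le_sum
          intro τ hτ
          have hx : term τ = x := (Finset.mem_filter.mp hτ).2
          have h := hprod_lower τ
          rw [hx] at h
          exact mul_le_mul_of_nonneg_left h (hpB_pos τ).le
  have hv_pos : ∀ x, 0 < v x := fun x =>
    lt_of_lt_of_le (mul_pos hA (hu_pos x)) (hv_lower x)
  set Su := ∑ y, u y with hSu_def
  set Sv := ∑ y, v y with hSv_def
  have hSu : 0 < Su := Finset.sum_pos (fun y _ => hu_pos y) univ_nonempty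
  have hSv : 0 < Sv := Finset.sum_pos (fun y _ => hv_pos y) univ_nonempty
  have hSv_upper : Sv ≤ B * Su := by
    calc Sv = ∑ y, v y := hSv_def
      _ ≤ ∑ y, B * u y := Finset.sum_le_sum (fun y _ => hv_upper y)
      _ = B * Su := by rw [← Finset.mul_sum]
  have hSv_lower : A * Su ≤ Sv := by
    calc A * Su = ∑ y, A * u y := by rw [← Finset.mul_sum]
      _ ≤ ∑ y, v y := Finset.sum_le_sum (fun y _ => hv_lower y)
      _ = Sv := hSv_def.symm
  have hpiG_pos : ∀ x, 0 < piG x := fun x => by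
    rw [hpiG]; exact div_pos (hu_pos x) hSu
  have hpiH_pos : ∀ x, 0 < piH x := fun x => by
    rw [hpiH]; exact div_pos (hv_pos x) hSv
  have hpiG_sum : ∑ x, piG x = 1 := by
    simp only [hpiG]
    rw [← Finset.sum_div, div_self hSu.ne']
  have hpiH_sum : ∑ x, piH x = 1 := by
    simp only [hpiH]
    rw [← Finset.sum_div, div_self hSv.ne']
  -- pointwise log bounds
  set L₁ := Real.log Sv - Real.log A - Real.log Su with hL₁_def
  set L₂ := Real.log B + Real.log Su - Real.log Sv with hL₂_def
  have hlog1 : ∀ x, Real.log (piG x / piH x) ≤ L₁ := by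
    intro x
    have h1 : Real.log (u x) ≤ Real.log (v x) - Real.log A := by
      rw [← Real.log_div (hv_pos x).ne' hA.ne']
      apply Real.log_le_log (hu_pos x)
      rw [le_div_iff₀ hA]
      calc u x * A = A * u x := by ring
        _ ≤ v x := hv_lower x
    rw [Real.log_div (hpiG_pos x).ne' (hpiH_pos x).ne', hpiG, hpiH,
      Real.log_div (hu_pos x).ne' hSu.ne', Real.log_div (hv_pos x).ne' hSv.ne']
    simp only [hL₁_def]
    linarith
  have hlog2 : ∀ x, Real.log (piH x / piG x) ≤ L₂ := by
    intro x
    have h1 : Real.log (v x) ≤ Real.log B + Real.log (u x) := by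
      rw [← Real.log_mul hB.ne' (hu_pos x).ne']
      exact Real.log_le_log (hv_pos x) (hv_upper x)
    rw [Real.log_div (hpiH_pos x).ne' (hpiG_pos x).ne', hpiG, hpiH,
      Real.log_div (hu_pos x).ne' hSu.ne', Real.log_div (hv_pos x).ne' hSv.ne']
    simp only [hL₂_def]
    linarith
  have hKL1 : ∑ x, piG x * Real.log (piG x / piH x) ≤ L₁ := by
    calc ∑ x, piG x * Real.log (piG x / piH x)
        ≤ ∑ x, piG x * L₁ := Finset.sum_le_sum (fun x _ =>
          mul_le_mul_of_nonneg_left (hlog1 x) (hpiG_pos x).le)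
      _ = L₁ := by rw [← Finset.sum_mul, hpiG_sum, one_mul]
  have hKL2 : ∑ x, piH x * Real.log (piH x / piG x) ≤ L₂ := by
    calc ∑ x, piH x * Real.log (piH x / piG x)
        ≤ ∑ x, piH x * L₂ := Finset.sum_le_sum (fun x _ =>
          mul_le_mul_of_nonneg_left (hlog2 x) (hpiH_pos x).le)
      _ = L₂ := by rw [← Finset.sum_mul, hpiH_sum, one_mul]
  have hrhs : ∑ n, Real.log ((1 + β n) / (1 - α n)) = Real.log B - Real.log A := by
    have h1 : ∀ n ∈ (univ : Finset (Fin N)),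
        Real.log ((1 + β n) / (1 - α n)) = Real.log (1 + β n) - Real.log (1 - α n) := by
      intro n _
      have hb := hβ n
      have ha := (hα n).2
      exact Real.log_div (by linarith) (by linarith)
    rw [Finset.sum_congr rfl h1, Finset.sum_sub_distrib,
      Real.log_prod (fun n _ => by have := hβ n; positivity),
      Real.log_prod (fun n _ => by have := (hα n).2; exact ne_of_gt (by linarith))]
  rw [hrhs]
  have : L₁ + L₂ = Real.log B - Real.log A := by simp only [hL₁_def, hL₂_def]; ring
  linarith
end

section
/- Contrastive balance condition, sufficiency (Lemma, converse direction). If the contrastive balance condition holds for (pF, pB, R), then the marginal of pF over terminal states satisfies p_T(x) = R(x)/Σ_{y∈𝒳} R(y) for all x ∈ 𝒳. -/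
open Finset

/-- Contrastive balance condition, sufficiency (Lemma, converse direction). -/
theorem contrastive_balance_sufficiency
    {T X : Type} [Fintype T] [Fintype X] [Nonempty T] [Nonempty X] [DecidableEq X]
    (term : T → X) (hsurj : Function.Surjective term)
    (pF pB : T → ℝ) (R : X → ℝ)
    (hpF_pos : ∀ τ, 0 < pF τ) (hpF_sum : ∑ τ, pF τ = 1)
    (hpB_pos : ∀ τ, 0 < pB τ)
    (hpB_sum : ∀ x, ∑ τ ∈ univ.filter (fun τ => term τ = x), pB τ = 1)
    (hR : ∀ x, 0 < R x)
    (hCB : ∀ τ τ', R (term τ') * pF τ * pB τ' = R (term τ) * pF τ' * pB τ) :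
    ∀ x, ∑ τ ∈ univ.filter (fun τ => term τ = x), pF τ = R x / ∑ y, R y := by
  obtain ⟨τ₀⟩ := ‹Nonempty T›
  set c : ℝ := pF τ₀ / (R (term τ₀) * pB τ₀) with hc
  have hkey : ∀ τ, pF τ = c * (R (term τ) * pB τ) := by
    intro τ
    have h := hCB τ τ₀
    have hne : R (term τ₀) * pB τ₀ ≠ 0 := ne_of_gt (mul_pos (hR _) (hpB_pos _))
    rw [hc, div_mul_eq_mul_div, eq_div_iff hne]
    linear_combination h
  have hsum : ∀ x, ∑ τ ∈ univ.filter (fun τ => term τ = x), pF τ = c * R x := by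
    intro x
    calc ∑ τ ∈ univ.filter (fun τ => term τ = x), pF τ
        = ∑ τ ∈ univ.filter (fun τ => term τ = x), c * R x * pB τ := by
          apply Finset.sum_congr rfl
          intro τ hτ
          rw [mem_filter] at hτ
          rw [hkey τ, hτ.2]; ring
      _ = c * R x * ∑ τ ∈ univ.filter (fun τ => term τ = x), pB τ := by
          rw [Finset.mul_sum]
      _ = c * R x := by rw [hpB_sum x, mul_one]
  have htot : c * ∑ y, R y = 1 := by
    rw [Finset.mul_sum, ← hpF_sum]
    rw [← Finset.sum_fiberwise (g := term) (s := univ) (f := pF)]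
    exact Finset.sum_congr rfl fun x _ => (hsum x).symm
  have hRsum : (0:ℝ) < ∑ y, R y := Finset.sum_pos (fun y _ => hR y) univ_nonempty
  intro x
  rw [hsum x]
  field_simp
  linear_combination R x * htot
end

section
/- Trajectory balance implies sampling proportionally to the reward. If the trajectory balance condition holds for (pF, pB, R) with constant Z > 0, then Z = Σ_{x∈𝒳} R(x) and the marginal of pF over terminal states satisfies p_T(x) = R(x)/Σ_{y∈𝒳} R(y) for all x ∈ 𝒳. -/
open Finset

/-- Trajectory balance implies sampling proportionally to the reward. -/
theorem trajectory_balance_samples_proportionally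
    {T X : Type} [Fintype T] [Fintype X] [Nonempty T] [Nonempty X] [DecidableEq X]
    (term : T → X) (hsurj : Function.Surjective term)
    (pF pB : T → ℝ) (R : X → ℝ)
    (hpF_pos : ∀ τ, 0 < pF τ) (hpF_sum : ∑ τ, pF τ = 1)
    (hpB_pos : ∀ τ, 0 < pB τ)
    (hpB_sum : ∀ x, ∑ τ ∈ univ.filter (fun τ => term τ = x), pB τ = 1)
    (hR : ∀ x, 0 < R x)
    (Z : ℝ) (hZ : 0 < Z)
    (hTB : ∀ τ, Z * pF τ = R (term τ) * pB τ) :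
    Z = (∑ x, R x) ∧
      ∀ x, ∑ τ ∈ univ.filter (fun τ => term τ = x), pF τ = R x / ∑ y, R y := by

  have hfib : ∀ x, Z * ∑ τ ∈ univ.filter (fun τ => term τ = x), pF τ = R x := by
    intro x
    rw [Finset.mul_sum]
    calc ∑ τ ∈ univ.filter (fun τ => term τ = x), Z * pF τ
        = ∑ τ ∈ univ.filter (fun τ => term τ = x), R x * pB τ := by
          apply Finset.sum_congr rfl
          intro τ hτ
          rw [hTB τ, (Finset.mem_filter.mp hτ).2]
      _ = R x * ∑ τ ∈ univ.filter (fun τ => term τ = x), pB τ := by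
          rw [Finset.mul_sum]
      _ = R x := by rw [hpB_sum x, mul_one]
  have hZeq : Z = ∑ x, R x := by
    calc Z = Z * ∑ τ, pF τ := by rw [hpF_sum, mul_one]
      _ = ∑ x, Z * ∑ τ ∈ univ.filter (fun τ => term τ = x), pF τ := by
          rw [← Finset.mul_sum, ← Finset.sum_fiberwise (g := term) (f := pF)]
      _ = ∑ x, R x := by exact Finset.sum_congr rfl fun x _ => hfib x
  refine ⟨hZeq, fun x => ?_⟩
  have := hfib x
  rw [hZeq] at this
  have hS : (0:ℝ) < ∑ y, R y := by rw [← hZeq]; exact hZ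
  rw [eq_div_iff hS.ne', mul_comm]
  exact this
end

section
/- Contrastive balance loss (Corollary, sufficiency direction). Let ν : 𝒯 × 𝒯 → ℝ satisfy ν(τ,τ') > 0 for all τ, τ' and Σ_{(τ,τ')∈𝒯×𝒯} ν(τ,τ') = 1. Define L_CB(τ,τ') = (log(pF(τ)/pB(τ)) − log(pF(τ')/pB(τ')) + log(R(term(τ'))/R(term(τ))))². If Σ_{(τ,τ')∈𝒯×𝒯} ν(τ,τ')·L_CB(τ,τ') = 0, then the marginal of pF over terminal states satisfies p_T(x) = R(x)/Σ_{y∈𝒳} R(y) for all x ∈ 𝒳. -/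
open Finset

/-- Contrastive balance loss (Corollary, sufficiency direction). -/
theorem contrastive_balance_loss_sufficiency
    {T X : Type} [Fintype T] [Fintype X] [Nonempty T] [Nonempty X] [DecidableEq X]
    (term : T → X) (hsurj : Function.Surjective term)
    (pF pB : T → ℝ) (R : X → ℝ)
    (hpF_pos : ∀ τ, 0 < pF τ) (hpF_sum : ∑ τ, pF τ = 1)
    (hpB_pos : ∀ τ, 0 < pB τ)
    (hpB_sum : ∀ x, ∑ τ ∈ univ.filter (fun τ => term τ = x), pB τ = 1)
    (hR : ∀ x, 0 < R x)
    (ν : T → T → ℝ) (hν_pos : ∀ τ τ', 0 < ν τ τ')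
    (hν_sum : ∑ τ, ∑ τ', ν τ τ' = 1)
    (L : T → T → ℝ)
    (hL : ∀ τ τ', L τ τ' =
      (Real.log (pF τ / pB τ) - Real.log (pF τ' / pB τ')
        + Real.log (R (term τ') / R (term τ))) ^ 2)
    (hzero : ∑ τ, ∑ τ', ν τ τ' * L τ τ' = 0) :
    ∀ x, ∑ τ ∈ univ.filter (fun τ => term τ = x), pF τ = R x / ∑ y, R y := by
  -- each term is zero
  have hLnn : ∀ τ τ', 0 ≤ L τ τ' := by
    intro τ τ'; rw [hL]; positivity
  have hL0 : ∀ τ τ', L τ τ' = 0 := by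
    intro τ τ'
    have hterm : ∀ σ ∈ (univ : Finset T), 0 ≤ ∑ σ', ν σ σ' * L σ σ' := by
      intro σ _
      exact Finset.sum_nonneg fun σ' _ => mul_nonneg (hν_pos σ σ').le (hLnn σ σ')
    have h1 : ∑ σ', ν τ σ' * L τ σ' = 0 :=
      (Finset.sum_eq_zero_iff_of_nonneg hterm).mp hzero τ (mem_univ τ)
    have h2 : ν τ τ' * L τ τ' = 0 :=
      (Finset.sum_eq_zero_iff_of_nonneg
        (fun σ' _ => mul_nonneg (hν_pos τ σ').le (hLnn τ σ'))).mp h1 τ' (mem_univ τ')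
    rcases mul_eq_zero.mp h2 with h | h
    · exact absurd h (hν_pos τ τ').ne'
    · exact h
  -- the quantity f τ = pF τ / (pB τ * R (term τ)) is constant
  set f : T → ℝ := fun τ => pF τ / (pB τ * R (term τ)) with hf
  have hfpos : ∀ τ, 0 < f τ := fun τ =>
    div_pos (hpF_pos τ) (mul_pos (hpB_pos τ) (hR (term τ)))
  obtain ⟨τ0⟩ := ‹Nonempty T›
  set c : ℝ := f τ0 with hc
  have hfc : ∀ τ, f τ = c := by
    intro τ
    have h := hL0 τ τ0
    rw [hL] at h
    have h' : Real.log (pF τ / pB τ) - Real.log (pF τ0 / pB τ0)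
        + Real.log (R (term τ0) / R (term τ)) = 0 := by
      exact pow_eq_zero_iff (n := 2) (by norm_num) |>.mp h
    have hlog : Real.log (f τ) = Real.log (f τ0) := by
      rw [hf]
      simp only
      rw [Real.log_div (hpF_pos τ).ne' (mul_pos (hpB_pos τ) (hR (term τ))).ne',
        Real.log_div (hpF_pos τ0).ne' (mul_pos (hpB_pos τ0) (hR (term τ0))).ne',
        Real.log_mul (hpB_pos τ).ne' (hR (term τ)).ne',
        Real.log_mul (hpB_pos τ0).ne' (hR (term τ0)).ne']
      rw [Real.log_div (hpF_pos τ).ne' (hpB_pos τ).ne',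
        Real.log_div (hpF_pos τ0).ne' (hpB_pos τ0).ne',
        Real.log_div (hR (term τ0)).ne' (hR (term τ)).ne'] at h'
      linarith
    have := Real.exp_log (hfpos τ)
    rw [hlog, Real.exp_log (hfpos τ0)] at this
    exact this.symm
  have hpFc : ∀ τ, pF τ = c * R (term τ) * pB τ := by
    intro τ
    have := hfc τ
    rw [hf] at this
    rw [div_eq_iff (mul_pos (hpB_pos τ) (hR (term τ))).ne'] at this
    rw [this]; ring
  -- fiber sums
  have hfib : ∀ x, ∑ τ ∈ univ.filter (fun τ => term τ = x), pF τ = c * R x := by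
    intro x
    rw [Finset.sum_congr rfl (fun τ hτ => by
      rw [hpFc τ, (Finset.mem_filter.mp hτ).2]), ← Finset.mul_sum, hpB_sum x, mul_one]
  have hsumR : 0 < ∑ y, R y :=
    Finset.sum_pos (fun y _ => hR y) (univ_nonempty)
  have htot : c * ∑ y, R y = 1 := by
    have := Finset.sum_fiberwise (univ : Finset T) term pF
    calc c * ∑ y, R y = ∑ y, c * R y := by rw [Finset.mul_sum]
      _ = ∑ y, ∑ τ ∈ univ.filter (fun τ => term τ = y), pF τ := by
          exact Finset.sum_congr rfl fun y _ => ((hfib y)).symm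
      _ = ∑ τ, pF τ := by
          simpa using Finset.sum_fiberwise (univ : Finset T) term pF
      _ = 1 := hpF_sum
  intro x
  rw [hfib x]
  field_simp
  linear_combination R x * htot
end

section
/- Aggregating balance loss (Corollary, sufficiency direction). Let ν : 𝒯 × 𝒯 → ℝ satisfy ν(τ,τ') > 0 for all τ, τ' and Σ_{(τ,τ')} ν(τ,τ') = 1. Define L_AB(τ,τ') = (log(pF(τ)·pB(τ')/(pB(τ)·pF(τ'))) − Σ_{n=1}^N log(pFₙ(τ)·pBₙ(τ')/(pBₙ(τ)·pFₙ(τ'))))². Suppose the trajectory balance condition holds for (pFₙ, pBₙ, Rₙ) for each n = 1, …, N, and Σ_{(τ,τ')} ν(τ,τ')·L_AB(τ,τ') = 0. Then the marginal of pF over terminal states satisfies p_T(x) = (∏_{n=1}^N Rₙ(x))/(Σ_{y∈𝒳} ∏_{n=1}^N Rₙ(y)) for all x ∈ 𝒳. -/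
open Finset

/-- Aggregating balance loss (Corollary, sufficiency direction). -/
theorem aggregating_balance_loss_sufficiency
    {T X : Type} [Fintype T] [Fintype X] [Nonempty T] [Nonempty X] [DecidableEq X]
    (term : T → X) (hsurj : Function.Surjective term)
    (N : ℕ) (pFn pBn : Fin N → T → ℝ) (Rn : Fin N → X → ℝ)
    (pF pB : T → ℝ)
    (hpFn_pos : ∀ n τ, 0 < pFn n τ) (hpFn_sum : ∀ n, ∑ τ, pFn n τ = 1)
    (hpBn_pos : ∀ n τ, 0 < pBn n τ)
    (hpBn_sum : ∀ n x, ∑ τ ∈ univ.filter (fun τ => term τ = x), pBn n τ = 1)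
    (hRn_pos : ∀ n x, 0 < Rn n x)
    (hpF_pos : ∀ τ, 0 < pF τ) (hpF_sum : ∑ τ, pF τ = 1)
    (hpB_pos : ∀ τ, 0 < pB τ)
    (hpB_sum : ∀ x, ∑ τ ∈ univ.filter (fun τ => term τ = x), pB τ = 1)
    (ν : T → T → ℝ) (hν_pos : ∀ τ τ', 0 < ν τ τ')
    (hν_sum : ∑ τ, ∑ τ', ν τ τ' = 1)
    (L : T → T → ℝ)
    (hL : ∀ τ τ', L τ τ' =
      (Real.log (pF τ * pB τ' / (pB τ * pF τ'))
        - ∑ n, Real.log (pFn n τ * pBn n τ' / (pBn n τ * pFn n τ'))) ^ 2)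
    (hTBn : ∀ n, ∃ Z > (0 : ℝ), ∀ τ, Z * pFn n τ = Rn n (term τ) * pBn n τ)
    (hzero : ∑ τ, ∑ τ', ν τ τ' * L τ τ' = 0) :
    ∀ x, ∑ τ ∈ univ.filter (fun τ => term τ = x), pF τ =
      (∏ n, Rn n x) / ∑ y, ∏ n, Rn n y := by
  -- Step 1: L τ τ' = 0 for all τ τ'
  choose Z hZpos hZ using hTBn
  have hL0 : ∀ τ τ', L τ τ' = 0 := by
    intro τ τ'
    have hnn : ∀ a ∈ (univ : Finset T), ∀ b ∈ (univ : Finset T), 0 ≤ ν a b * L a b := by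
      intro a _ b _
      exact mul_nonneg (hν_pos a b).le (by rw [hL]; positivity)
    have h1 : ∀ a ∈ (univ : Finset T), 0 ≤ ∑ b, ν a b * L a b := by
      intro a ha; exact Finset.sum_nonneg (fun b hb => hnn a ha b hb)
    have h2 := (Finset.sum_eq_zero_iff_of_nonneg h1).mp hzero τ (mem_univ τ)
    have h3 := (Finset.sum_eq_zero_iff_of_nonneg (fun b hb => hnn τ (mem_univ τ) b hb)).mp h2 τ' (mem_univ τ')
    rcases mul_eq_zero.mp h3 with h | h
    · exact absurd h (hν_pos τ τ').ne'
    · exact h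
  -- Step 2: the function g is constant
  have hgconst : ∀ τ τ',
      Real.log (pF τ / pB τ) - ∑ n, Real.log (pFn n τ / pBn n τ)
        = Real.log (pF τ' / pB τ') - ∑ n, Real.log (pFn n τ' / pBn n τ') := by
    intro τ τ'
    have h := hL0 τ τ'
    rw [hL] at h
    have hsq := pow_eq_zero_iff (n := 2) (by norm_num) |>.mp h
    have hlog1 : Real.log (pF τ * pB τ' / (pB τ * pF τ'))
        = Real.log (pF τ / pB τ) - Real.log (pF τ' / pB τ') := by
      rw [Real.log_div (mul_pos (hpF_pos τ) (hpB_pos τ')).ne'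
          (mul_pos (hpB_pos τ) (hpF_pos τ')).ne',
        Real.log_mul (hpF_pos τ).ne' (hpB_pos τ').ne',
        Real.log_mul (hpB_pos τ).ne' (hpF_pos τ').ne',
        Real.log_div (hpF_pos τ).ne' (hpB_pos τ).ne',
        Real.log_div (hpF_pos τ').ne' (hpB_pos τ').ne']
      ring
    have hlogn : ∀ n : Fin N, Real.log (pFn n τ * pBn n τ' / (pBn n τ * pFn n τ'))
        = Real.log (pFn n τ / pBn n τ) - Real.log (pFn n τ' / pBn n τ') := by
      intro n
      rw [Real.log_div (mul_pos (hpFn_pos n τ) (hpBn_pos n τ')).ne'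
          (mul_pos (hpBn_pos n τ) (hpFn_pos n τ')).ne',
        Real.log_mul (hpFn_pos n τ).ne' (hpBn_pos n τ').ne',
        Real.log_mul (hpBn_pos n τ).ne' (hpFn_pos n τ').ne',
        Real.log_div (hpFn_pos n τ).ne' (hpBn_pos n τ).ne',
        Real.log_div (hpFn_pos n τ').ne' (hpBn_pos n τ').ne']
      ring
    rw [hlog1, Finset.sum_congr rfl (fun n _ => hlogn n), Finset.sum_sub_distrib] at hsq
    linarith [sub_eq_zero.mp hsq]
  -- Step 3: ratio formula
  have hratio : ∀ n τ, pFn n τ / pBn n τ = Rn n (term τ) / Z n := by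
    intro n τ
    have h := hZ n τ
    rw [div_eq_div_iff (hpBn_pos n τ).ne' (hZpos n).ne']
    linarith [h]
  -- Step 4: pF τ = c * ∏ Rn(term τ) * pB τ
  obtain ⟨τ0⟩ := ‹Nonempty T›
  set c : ℝ := Real.exp ((Real.log (pF τ0 / pB τ0)
      - ∑ n, Real.log (pFn n τ0 / pBn n τ0)) - ∑ n, Real.log (Z n)) with hc
  have hcpos : 0 < c := Real.exp_pos _
  have hkey : ∀ τ, pF τ = c * (∏ n, Rn n (term τ)) * pB τ := by
    intro τ
    have h1 := hgconst τ τ0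
    have h2 : Real.log (pF τ / pB τ)
        = (Real.log (pF τ0 / pB τ0) - ∑ n, Real.log (pFn n τ0 / pBn n τ0))
          + ∑ n, Real.log (Rn n (term τ) / Z n) := by
      have e : ∑ n, Real.log (pFn n τ / pBn n τ) = ∑ n, Real.log (Rn n (term τ) / Z n) :=
        Finset.sum_congr rfl (fun n _ => by rw [hratio n τ])
      linarith [e ▸ h1]
    have h3 : ∀ n : Fin N, Real.log (Rn n (term τ) / Z n)
        = Real.log (Rn n (term τ)) - Real.log (Z n) :=
      fun n => Real.log_div (hRn_pos n (term τ)).ne' (hZpos n).ne'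
    rw [Finset.sum_congr rfl (fun n _ => h3 n), Finset.sum_sub_distrib] at h2
    have h4 : pF τ / pB τ = Real.exp (Real.log (pF τ / pB τ)) :=
      (Real.exp_log (div_pos (hpF_pos τ) (hpB_pos τ))).symm
    have h5 : Real.exp (∑ n, Real.log (Rn n (term τ))) = ∏ n, Rn n (term τ) := by
      rw [Real.exp_sum]
      exact Finset.prod_congr rfl (fun n _ => Real.exp_log (hRn_pos n (term τ)))
    have h6 : pF τ / pB τ = c * ∏ n, Rn n (term τ) := by
      rw [h4, h2, hc, ← h5, ← Real.exp_add]
      congr 1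
      ring
    rw [div_eq_iff (hpB_pos τ).ne'] at h6
    linarith [h6]
  -- Step 5: marginal
  have hmarg : ∀ x, ∑ τ ∈ univ.filter (fun τ => term τ = x), pF τ
      = c * ∏ n, Rn n x := by
    intro x
    have : ∑ τ ∈ univ.filter (fun τ => term τ = x), pF τ
        = ∑ τ ∈ univ.filter (fun τ => term τ = x), c * (∏ n, Rn n x) * pB τ := by
      apply Finset.sum_congr rfl
      intro τ hτ
      have hx : term τ = x := (Finset.mem_filter.mp hτ).2
      rw [hkey τ, hx]
    rw [this, ← Finset.mul_sum, hpB_sum x, mul_one]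
  -- Step 6: normalization
  have hnorm : c * ∑ y, ∏ n, Rn n y = 1 := by
    have hfib : ∑ y, ∑ τ ∈ univ.filter (fun τ => term τ = y), pF τ = ∑ τ, pF τ :=
      Finset.sum_fiberwise_of_maps_to (fun τ _ => mem_univ (term τ)) pF
    rw [hpF_sum] at hfib
    calc c * ∑ y, ∏ n, Rn n y = ∑ y, c * ∏ n, Rn n y := Finset.mul_sum _ _ _
      _ = ∑ y, ∑ τ ∈ univ.filter (fun τ => term τ = y), pF τ :=
          Finset.sum_congr rfl (fun y _ => (hmarg y).symm)
      _ = 1 := hfib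
  have hSpos : 0 < ∑ y, ∏ n, Rn n y :=
    Finset.sum_pos (fun y _ => Finset.prod_pos (fun n _ => hRn_pos n y)) univ_nonempty
  intro x
  rw [hmarg x, eq_div_iff hSpos.ne',
    show c * (∏ n, Rn n x) * ∑ y, ∏ n, Rn n y
      = (∏ n, Rn n x) * (c * ∑ y, ∏ n, Rn n y) from by ring, hnorm, mul_one]
end

section
/- Marginal of an aggregating-balanced model under imperfect local inference (Remark 1). If the aggregating balance condition holds for (pF₁,pB₁), …, (pF_N,pB_N) together with (pF, pB), then for all x ∈ 𝒳, p_T(x) = v(x)/Σ_{y∈𝒳} v(y), where v(x) := Σ_{τ : term(τ)=x} pB(τ)·∏_{n=1}^N pFₙ(τ)/pBₙ(τ) and p_T is the marginal of pF over terminal states. -/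
open Finset

/-- Marginal of an aggregating-balanced model under imperfect local
inference (Remark 1). -/
theorem aggregating_balance_marginal_imperfect
    {T X : Type} [Fintype T] [Fintype X] [Nonempty T] [Nonempty X] [DecidableEq X]
    (term : T → X) (hsurj : Function.Surjective term)
    (N : ℕ) (pFn pBn : Fin N → T → ℝ)
    (pF pB : T → ℝ)
    (hpFn_pos : ∀ n τ, 0 < pFn n τ) (hpFn_sum : ∀ n, ∑ τ, pFn n τ = 1)
    (hpBn_pos : ∀ n τ, 0 < pBn n τ)
    (hpBn_sum : ∀ n x, ∑ τ ∈ univ.filter (fun τ => term τ = x), pBn n τ = 1)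
    (hpF_pos : ∀ τ, 0 < pF τ) (hpF_sum : ∑ τ, pF τ = 1)
    (hpB_pos : ∀ τ, 0 < pB τ)
    (hpB_sum : ∀ x, ∑ τ ∈ univ.filter (fun τ => term τ = x), pB τ = 1)
    (hAB : ∀ τ τ', pF τ * pB τ' * ∏ n, (pBn n τ * pFn n τ') =
      pB τ * pF τ' * ∏ n, (pFn n τ * pBn n τ'))
    (v : X → ℝ)
    (hv : ∀ x, v x = ∑ τ ∈ univ.filter (fun τ => term τ = x),
      pB τ * ∏ n, pFn n τ / pBn n τ) :
    ∀ x, ∑ τ ∈ univ.filter (fun τ => term τ = x), pF τ = v x / ∑ y, v y := by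
  set w : T → ℝ := fun τ => pB τ * ∏ n, pFn n τ / pBn n τ with hw
  have hw_pos : ∀ τ, 0 < w τ := by
    intro τ
    exact mul_pos (hpB_pos τ) (Finset.prod_pos fun n _ =>
      div_pos (hpFn_pos n τ) (hpBn_pos n τ))
  have key : ∀ τ τ', pF τ * w τ' = pF τ' * w τ := by
    intro τ τ'
    have h := hAB τ τ'
    have h1 : (0:ℝ) < ∏ n, pBn n τ := Finset.prod_pos fun n _ => hpBn_pos n τ
    have h2 : (0:ℝ) < ∏ n, pBn n τ' := Finset.prod_pos fun n _ => hpBn_pos n τ'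
    rw [Finset.prod_mul_distrib, Finset.prod_mul_distrib] at h
    simp only [hw, Finset.prod_div_distrib]
    field_simp
    linear_combination h
  have hS : (0:ℝ) < ∑ τ, w τ :=
    Finset.sum_pos (fun τ _ => hw_pos τ) (univ_nonempty)
  have hpF_eq : ∀ τ, pF τ = w τ / ∑ τ', w τ' := by
    intro τ
    have : pF τ * ∑ τ', w τ' = w τ := by
      rw [Finset.mul_sum]
      calc ∑ τ', pF τ * w τ' = ∑ τ', pF τ' * w τ := by
            exact Finset.sum_congr rfl fun τ' _ => key τ τ'
        _ = (∑ τ', pF τ') * w τ := by rw [Finset.sum_mul]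
        _ = w τ := by rw [hpF_sum, one_mul]
    field_simp
    linarith [this]
  have hSv : ∑ y, v y = ∑ τ, w τ := by
    rw [← Finset.sum_fiberwise univ term w]
    exact Finset.sum_congr rfl fun y _ => hv y
  intro x
  rw [hv x, hSv]
  rw [Finset.sum_div]
  exact Finset.sum_congr rfl fun τ _ => hpF_eq τ
end

section
/- Forward KL half-bound in the proof of Theorem 2. For n = 1, …, N let πₙ(x) = Rₙ(x)/Σ_{y} Rₙ(y), and suppose there are αₙ ∈ (0,1) and βₙ > 0 with (1 − αₙ)·pBₙ(τ)·πₙ(term(τ)) ≤ pFₙ(τ) ≤ (1 + βₙ)·pBₙ(τ)·πₙ(term(τ)) for all τ ∈ 𝒯. Let pB be any backward policy. With u(x) = ∏_{n=1}^N πₙ(x), π(x) = u(x)/Σ_y u(y), v(x) = Σ_{τ : term(τ)=x} pB(τ)·∏_{n=1}^N pFₙ(τ)/pBₙ(τ), and π̂(x) = v(x)/Σ_y v(y), it holds that Σ_{x∈𝒳} π(x)·log(π(x)/π̂(x)) ≤ log(Σ_x v(x)/Σ_x u(x)) + Σ_{n=1}^N log(1/(1 − αₙ)). -/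
open Finset

/-- Forward KL half-bound in the proof of Theorem 2. -/
theorem forward_kl_half_bound
    {T X : Type} [Fintype T] [Fintype X] [Nonempty T] [Nonempty X] [DecidableEq X]
    (term : T → X) (hsurj : Function.Surjective term)
    (N : ℕ) (pFn pBn : Fin N → T → ℝ) (Rn : Fin N → X → ℝ)
    (hpFn_pos : ∀ n τ, 0 < pFn n τ) (hpFn_sum : ∀ n, ∑ τ, pFn n τ = 1)
    (hpBn_pos : ∀ n τ, 0 < pBn n τ)
    (hpBn_sum : ∀ n x, ∑ τ ∈ univ.filter (fun τ => term τ = x), pBn n τ = 1)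
    (hRn_pos : ∀ n x, 0 < Rn n x)
    (pB : T → ℝ) (hpB_pos : ∀ τ, 0 < pB τ)
    (hpB_sum : ∀ x, ∑ τ ∈ univ.filter (fun τ => term τ = x), pB τ = 1)
    (α β : Fin N → ℝ) (hα : ∀ n, α n ∈ Set.Ioo (0 : ℝ) 1) (hβ : ∀ n, 0 < β n)
    (piL : Fin N → X → ℝ) (hpiL : ∀ n x, piL n x = Rn n x / ∑ y, Rn n y)
    (hlower : ∀ n τ, (1 - α n) * (pBn n τ * piL n (term τ)) ≤ pFn n τ)
    (hupper : ∀ n τ, pFn n τ ≤ (1 + β n) * (pBn n τ * piL n (term τ)))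
    (u : X → ℝ) (hu : ∀ x, u x = ∏ n, piL n x)
    (piG : X → ℝ) (hpiG : ∀ x, piG x = u x / ∑ y, u y)
    (v : X → ℝ)
    (hv : ∀ x, v x = ∑ τ ∈ univ.filter (fun τ => term τ = x),
      pB τ * ∏ n, pFn n τ / pBn n τ)
    (piH : X → ℝ) (hpiH : ∀ x, piH x = v x / ∑ y, v y) :
    ∑ x, piG x * Real.log (piG x / piH x) ≤
      Real.log ((∑ x, v x) / ∑ x, u x) + ∑ n, Real.log (1 / (1 - α n)) := by
  classical
  have hpiL_pos : ∀ n x, 0 < piL n x := by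
    intro n x
    rw [hpiL]
    exact div_pos (hRn_pos n x) (Finset.sum_pos (fun y _ => hRn_pos n y) univ_nonempty)
  have hu_pos : ∀ x, 0 < u x := fun x => by
    rw [hu]; exact Finset.prod_pos fun n _ => hpiL_pos n x
  have hU_pos : 0 < ∑ y, u y := Finset.sum_pos (fun y _ => hu_pos y) univ_nonempty
  have hv_pos : ∀ x, 0 < v x := by
    intro x
    rw [hv]
    obtain ⟨τ, hτ⟩ := hsurj x
    refine Finset.sum_pos (fun τ' _ => ?_) ⟨τ, by simp [hτ]⟩
    exact mul_pos (hpB_pos τ')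
      (Finset.prod_pos fun n _ => div_pos (hpFn_pos n τ') (hpBn_pos n τ'))
  have hV_pos : 0 < ∑ y, v y := Finset.sum_pos (fun y _ => hv_pos y) univ_nonempty
  set U := ∑ y, u y with hUdef
  set V := ∑ y, v y with hVdef
  set c := ∏ n, (1 - α n) with hc
  have hc_pos : 0 < c := Finset.prod_pos fun n _ => sub_pos.mpr (hα n).2
  -- key pointwise bound: c * u x ≤ v x
  have key : ∀ x, c * u x ≤ v x := by
    intro x
    rw [hv, hu]
    have h1 : c * ∏ n, piL n x
        = ∑ τ ∈ univ.filter (fun τ => term τ = x), pB τ * (c * ∏ n, piL n x) := by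
      rw [← Finset.sum_mul, hpB_sum x, one_mul]
    rw [h1]
    refine Finset.sum_le_sum fun τ hτ => ?_
    have hterm : term τ = x := (Finset.mem_filter.mp hτ).2
    refine mul_le_mul_of_nonneg_left ?_ (hpB_pos τ).le
    rw [hc, ← Finset.prod_mul_distrib]
    refine Finset.prod_le_prod (fun n _ => ?_) (fun n _ => ?_)
    · exact mul_nonneg (sub_pos.mpr (hα n).2).le (hpiL_pos n x).le
    · rw [← hterm, le_div_iff₀ (hpBn_pos n τ)]
      calc (1 - α n) * piL n (term τ) * pBn n τ
          = (1 - α n) * (pBn n τ * piL n (term τ)) := by ring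
        _ ≤ pFn n τ := hlower n τ
  -- pointwise log bound
  have hbound : ∀ x, piG x * Real.log (piG x / piH x)
      ≤ piG x * Real.log (V / (U * c)) := by
    intro x
    have hpG : 0 < piG x := by rw [hpiG]; exact div_pos (hu_pos x) hU_pos
    have hpH : 0 < piH x := by rw [hpiH]; exact div_pos (hv_pos x) hV_pos
    refine mul_le_mul_of_nonneg_left ?_ hpG.le
    have hratio : piG x / piH x ≤ V / (U * c) := by
      have heq : piG x / piH x = (u x / v x) * (V / U) := by
        rw [hpiG, hpiH]
        field_simp
      have heq2 : V / (U * c) = (1 / c) * (V / U) := by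
        field_simp
      rw [heq, heq2]
      have huv : u x / v x ≤ 1 / c := by
        rw [div_le_div_iff₀ (hv_pos x) hc_pos]
        calc u x * c = c * u x := by ring
          _ ≤ v x := key x
          _ = 1 * v x := by ring
      exact mul_le_mul_of_nonneg_right huv (div_pos hV_pos hU_pos).le
    exact Real.log_le_log (div_pos hpG hpH) hratio
  calc ∑ x, piG x * Real.log (piG x / piH x)
      ≤ ∑ x, piG x * Real.log (V / (U * c)) := Finset.sum_le_sum fun x _ => hbound x
    _ = (∑ x, piG x) * Real.log (V / (U * c)) := Eq.symm (Finset.sum_mul univ piG _)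
    _ = Real.log (V / (U * c)) := by
        have : ∑ x, piG x = 1 := by
          have : ∑ x, piG x = (∑ x, u x) / U := by
            rw [Finset.sum_div]
            exact Finset.sum_congr rfl fun x _ => hpiG x
          rw [this, ← hUdef, div_self hU_pos.ne']
        rw [this, one_mul]
    _ = Real.log (V / U) + ∑ n, Real.log (1 / (1 - α n)) := by
        have hs : ∑ n, Real.log (1 / (1 - α n)) = - Real.log c := by
          rw [hc, ← Real.log_inv, ← Real.log_prod (fun n _ => by
            have := sub_pos.mpr (hα n).2
            positivity)]
          congr 1
          rw [← Finset.prod_inv_distrib]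
          exact Finset.prod_congr rfl fun n _ => (one_div _)
        rw [hs, div_mul_eq_div_div, Real.log_div (div_pos hV_pos hU_pos).ne' hc_pos.ne']
        ring
end

section
/- Reverse KL half-bound in the proof of Theorem 2. For n = 1, …, N let πₙ(x) = Rₙ(x)/Σ_{y} Rₙ(y), and suppose there are αₙ ∈ (0,1) and βₙ > 0 with (1 − αₙ)·pBₙ(τ)·πₙ(term(τ)) ≤ pFₙ(τ) ≤ (1 + βₙ)·pBₙ(τ)·πₙ(term(τ)) for all τ ∈ 𝒯. Let pB be any backward policy. With u(x) = ∏_{n=1}^N πₙ(x), π(x) = u(x)/Σ_y u(y), v(x) = Σ_{τ : term(τ)=x} pB(τ)·∏_{n=1}^N pFₙ(τ)/pBₙ(τ), and π̂(x) = v(x)/Σ_y v(y), it holds that Σ_{x∈𝒳} π̂(x)·log(π̂(x)/π(x)) ≤ log(Σ_x u(x)/Σ_x v(x)) + Σ_{n=1}^N log(1 + βₙ). -/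
open Finset

/-- Reverse KL half-bound in the proof of Theorem 2. -/
theorem reverse_kl_half_bound
    {T X : Type} [Fintype T] [Fintype X] [Nonempty T] [Nonempty X] [DecidableEq X]
    (term : T → X) (hsurj : Function.Surjective term)
    (N : ℕ) (pFn pBn : Fin N → T → ℝ) (Rn : Fin N → X → ℝ)
    (hpFn_pos : ∀ n τ, 0 < pFn n τ) (hpFn_sum : ∀ n, ∑ τ, pFn n τ = 1)
    (hpBn_pos : ∀ n τ, 0 < pBn n τ)
    (hpBn_sum : ∀ n x, ∑ τ ∈ univ.filter (fun τ => term τ = x), pBn n τ = 1)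
    (hRn_pos : ∀ n x, 0 < Rn n x)
    (pB : T → ℝ) (hpB_pos : ∀ τ, 0 < pB τ)
    (hpB_sum : ∀ x, ∑ τ ∈ univ.filter (fun τ => term τ = x), pB τ = 1)
    (α β : Fin N → ℝ) (hα : ∀ n, α n ∈ Set.Ioo (0 : ℝ) 1) (hβ : ∀ n, 0 < β n)
    (piL : Fin N → X → ℝ) (hpiL : ∀ n x, piL n x = Rn n x / ∑ y, Rn n y)
    (hlower : ∀ n τ, (1 - α n) * (pBn n τ * piL n (term τ)) ≤ pFn n τ)
    (hupper : ∀ n τ, pFn n τ ≤ (1 + β n) * (pBn n τ * piL n (term τ)))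
    (u : X → ℝ) (hu : ∀ x, u x = ∏ n, piL n x)
    (piG : X → ℝ) (hpiG : ∀ x, piG x = u x / ∑ y, u y)
    (v : X → ℝ)
    (hv : ∀ x, v x = ∑ τ ∈ univ.filter (fun τ => term τ = x),
      pB τ * ∏ n, pFn n τ / pBn n τ)
    (piH : X → ℝ) (hpiH : ∀ x, piH x = v x / ∑ y, v y) :
    ∑ x, piH x * Real.log (piH x / piG x) ≤
      Real.log ((∑ x, u x) / ∑ x, v x) + ∑ n, Real.log (1 + β n) := by
  have hπpos : ∀ n x, 0 < piL n x := by
    intro n x; rw [hpiL]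
    exact div_pos (hRn_pos n x) (Finset.sum_pos (fun y _ => hRn_pos n y) univ_nonempty)
  have hu_pos : ∀ x, 0 < u x := fun x => by
    rw [hu]; exact Finset.prod_pos (fun n _ => hπpos n x)
  have hv_pos : ∀ x, 0 < v x := fun x => by
    rw [hv]
    obtain ⟨τ₀, hτ₀⟩ := hsurj x
    exact Finset.sum_pos (fun τ _ => mul_pos (hpB_pos τ)
      (Finset.prod_pos fun n _ => div_pos (hpFn_pos n τ) (hpBn_pos n τ)))
      ⟨τ₀, mem_filter.mpr ⟨mem_univ _, hτ₀⟩⟩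
  set C := ∏ n, (1 + β n) with hC
  have hCpos : 0 < C := Finset.prod_pos fun n _ => by linarith [hβ n]
  have hvle : ∀ x, v x ≤ C * u x := by
    intro x
    rw [hv]
    calc ∑ τ ∈ univ.filter (fun τ => term τ = x), pB τ * ∏ n, pFn n τ / pBn n τ
        ≤ ∑ τ ∈ univ.filter (fun τ => term τ = x), pB τ * (C * u x) := by
          apply Finset.sum_le_sum
          intro τ hτ
          have hx : term τ = x := (mem_filter.mp hτ).2
          apply mul_le_mul_of_nonneg_left _ (hpB_pos τ).le
          calc ∏ n, pFn n τ / pBn n τ ≤ ∏ n, (1 + β n) * piL n x := by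
                apply Finset.prod_le_prod
                · intro n _
                  exact div_nonneg (hpFn_pos n τ).le (hpBn_pos n τ).le
                · intro n _
                  rw [div_le_iff₀ (hpBn_pos n τ)]
                  calc pFn n τ ≤ (1 + β n) * (pBn n τ * piL n (term τ)) := hupper n τ
                    _ = (1 + β n) * piL n x * pBn n τ := by rw [hx]; ring
            _ = C * u x := by rw [Finset.prod_mul_distrib, hu]
      _ = C * u x := by rw [← Finset.sum_mul, hpB_sum x, one_mul]
  set Su := ∑ x, u x with hSu
  set Sv := ∑ x, v x with hSv
  have hSu_pos : 0 < Su := Finset.sum_pos (fun x _ => hu_pos x) univ_nonempty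
  have hSv_pos : 0 < Sv := Finset.sum_pos (fun x _ => hv_pos x) univ_nonempty
  have hπH_pos : ∀ x, 0 < piH x := fun x => by
    rw [hpiH]; exact div_pos (hv_pos x) hSv_pos
  have hπHsum : ∑ x, piH x = 1 := by
    simp only [hpiH]
    rw [← Finset.sum_div, div_self hSv_pos.ne']
  have key : ∀ x : X, piH x * Real.log (piH x / piG x) ≤
      piH x * (Real.log (Su / Sv) + Real.log C) := by
    intro x
    apply mul_le_mul_of_nonneg_left _ (hπH_pos x).le
    have hratio : piH x / piG x = (v x / u x) * (Su / Sv) := by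
      rw [hpiH, hpiG]
      field_simp
    rw [hratio, Real.log_mul (div_pos (hv_pos x) (hu_pos x)).ne' (div_pos hSu_pos hSv_pos).ne', add_comm]
    apply (add_le_add_iff_left _).mpr
    have : v x / u x ≤ C := by
      rw [div_le_iff₀ (hu_pos x)]; exact hvle x
    exact Real.log_le_log (div_pos (hv_pos x) (hu_pos x)) this
  calc ∑ x, piH x * Real.log (piH x / piG x)
      ≤ ∑ x, piH x * (Real.log (Su / Sv) + Real.log C) :=
        Finset.sum_le_sum (fun x _ => key x)
    _ = Real.log (Su / Sv) + Real.log C := by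
        rw [← Finset.sum_mul, hπHsum, one_mul]
    _ = Real.log (Su / Sv) + ∑ n, Real.log (1 + β n) := by
        rw [hC, Real.log_prod]
        intro n _
        have := hβ n; linarith
end

section
/- Sandwich bound on the aggregated unnormalized marginal (intermediate step of Theorem 2). For n = 1, …, N let πₙ(x) = Rₙ(x)/Σ_{y} Rₙ(y), and suppose there are αₙ ∈ (0,1) and βₙ > 0 with (1 − αₙ)·pBₙ(τ)·πₙ(term(τ)) ≤ pFₙ(τ) ≤ (1 + βₙ)·pBₙ(τ)·πₙ(term(τ)) for all τ ∈ 𝒯. Let pB be any backward policy, u(x) = ∏_{n=1}^N πₙ(x), and v(x) = Σ_{τ : term(τ)=x} pB(τ)·∏_{n=1}^N pFₙ(τ)/pBₙ(τ). Then for every x ∈ 𝒳, u(x)·∏_{n=1}^N (1 − αₙ) ≤ v(x) ≤ u(x)·∏_{n=1}^N (1 + βₙ). -/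
open Finset

/-- Sandwich bound on the aggregated unnormalized marginal
(intermediate step of Theorem 2). -/
theorem sandwich_bound_aggregated_marginal
    {T X : Type} [Fintype T] [Fintype X] [Nonempty T] [Nonempty X] [DecidableEq X]
    (term : T → X) (hsurj : Function.Surjective term)
    (N : ℕ) (pFn pBn : Fin N → T → ℝ) (Rn : Fin N → X → ℝ)
    (hpFn_pos : ∀ n τ, 0 < pFn n τ) (hpFn_sum : ∀ n, ∑ τ, pFn n τ = 1)
    (hpBn_pos : ∀ n τ, 0 < pBn n τ)
    (hpBn_sum : ∀ n x, ∑ τ ∈ univ.filter (fun τ => term τ = x), pBn n τ = 1)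
    (hRn_pos : ∀ n x, 0 < Rn n x)
    (pB : T → ℝ) (hpB_pos : ∀ τ, 0 < pB τ)
    (hpB_sum : ∀ x, ∑ τ ∈ univ.filter (fun τ => term τ = x), pB τ = 1)
    (α β : Fin N → ℝ) (hα : ∀ n, α n ∈ Set.Ioo (0 : ℝ) 1) (hβ : ∀ n, 0 < β n)
    (piL : Fin N → X → ℝ) (hpiL : ∀ n x, piL n x = Rn n x / ∑ y, Rn n y)
    (hlower : ∀ n τ, (1 - α n) * (pBn n τ * piL n (term τ)) ≤ pFn n τ)
    (hupper : ∀ n τ, pFn n τ ≤ (1 + β n) * (pBn n τ * piL n (term τ)))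
    (u : X → ℝ) (hu : ∀ x, u x = ∏ n, piL n x)
    (v : X → ℝ)
    (hv : ∀ x, v x = ∑ τ ∈ univ.filter (fun τ => term τ = x),
      pB τ * ∏ n, pFn n τ / pBn n τ) :
    ∀ x, u x * (∏ n, (1 - α n)) ≤ v x ∧ v x ≤ u x * ∏ n, (1 + β n) := by
  intro x
  have hpi_pos : ∀ n x, 0 < piL n x := by
    intro n x
    rw [hpiL]
    exact div_pos (hRn_pos n x) (Finset.sum_pos (fun y _ => hRn_pos n y) univ_nonempty)
  -- per-trajectory ratio bounds
  have hratL : ∀ n τ, term τ = x → (1 - α n) * piL n x ≤ pFn n τ / pBn n τ := by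
    intro n τ hτ
    rw [le_div_iff₀ (hpBn_pos n τ)]
    have := hlower n τ
    rw [hτ] at this
    linarith [this]
  have hratU : ∀ n τ, term τ = x → pFn n τ / pBn n τ ≤ (1 + β n) * piL n x := by
    intro n τ hτ
    rw [div_le_iff₀ (hpBn_pos n τ)]
    have := hupper n τ
    rw [hτ] at this
    linarith [this]
  have hprodL : ∀ τ ∈ univ.filter (fun τ => term τ = x),
      u x * (∏ n, (1 - α n)) ≤ ∏ n, pFn n τ / pBn n τ := by
    intro τ hτ
    simp only [mem_filter] at hτ
    have : ∏ n, (1 - α n) * piL n x ≤ ∏ n, pFn n τ / pBn n τ := by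
      apply Finset.prod_le_prod
      · intro n _
        exact mul_nonneg (by linarith [(hα n).2]) (hpi_pos n x).le
      · intro n _; exact hratL n τ hτ.2
    calc u x * (∏ n, (1 - α n)) = ∏ n, (1 - α n) * piL n x := by
          rw [hu, Finset.prod_mul_distrib]; ring
      _ ≤ _ := this
  have hprodU : ∀ τ ∈ univ.filter (fun τ => term τ = x),
      ∏ n, pFn n τ / pBn n τ ≤ u x * ∏ n, (1 + β n) := by
    intro τ hτ
    simp only [mem_filter] at hτ
    have : ∏ n, pFn n τ / pBn n τ ≤ ∏ n, (1 + β n) * piL n x := by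
      apply Finset.prod_le_prod
      · intro n _
        exact div_nonneg (hpFn_pos n τ).le (hpBn_pos n τ).le
      · intro n _; exact hratU n τ hτ.2
    calc ∏ n, pFn n τ / pBn n τ ≤ ∏ n, (1 + β n) * piL n x := this
      _ = u x * ∏ n, (1 + β n) := by rw [hu, Finset.prod_mul_distrib]; ring
  constructor
  · rw [hv]
    calc u x * (∏ n, (1 - α n))
        = ∑ τ ∈ univ.filter (fun τ => term τ = x), pB τ * (u x * ∏ n, (1 - α n)) := by
          rw [← Finset.sum_mul, hpB_sum, one_mul]
      _ ≤ _ := by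
          apply Finset.sum_le_sum
          intro τ hτ
          exact mul_le_mul_of_nonneg_left (hprodL τ hτ) (hpB_pos τ).le
  · rw [hv]
    calc ∑ τ ∈ univ.filter (fun τ => term τ = x), pB τ * ∏ n, pFn n τ / pBn n τ
        ≤ ∑ τ ∈ univ.filter (fun τ => term τ = x), pB τ * (u x * ∏ n, (1 + β n)) := by
          apply Finset.sum_le_sum
          intro τ hτ
          exact mul_le_mul_of_nonneg_left (hprodU τ hτ) (hpB_pos τ).le
      _ = u x * ∏ n, (1 + β n) := by rw [← Finset.sum_mul, hpB_sum, one_mul]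
end

section
/- Variational inference and contrastive balance (Theorem 3). Let d ∈ ℕ and let pF : ℝ^d → 𝒯 → ℝ satisfy, for every θ ∈ ℝ^d: pF(θ)(τ) > 0 for all τ, Σ_{τ∈𝒯} pF(θ)(τ) = 1, and θ ↦ pF(θ)(τ) is differentiable for each τ. Let pB be a backward policy and R a reward, and define the probability q(τ) = R(term(τ))·pB(τ)/Σ_{x∈𝒳} R(x) on 𝒯. Define the KL divergence D(θ) = Σ_{τ} pF(θ)(τ)·log(pF(θ)(τ)/q(τ)) and the contrastive balance loss L_CB(τ,τ',θ) = (log(pF(θ)(τ)/pB(τ)) − log(pF(θ)(τ')/pB(τ')) + log(R(term(τ'))/R(term(τ))))². Then for every θ ∈ ℝ^d, the gradient satisfies ∇_θ D(θ) = (1/4)·Σ_{(τ,τ')∈𝒯×𝒯} pF(θ)(τ)·pF(θ)(τ')·∇_θ L_CB(τ,τ',θ). -/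
open Finset

/-- Pure algebra: the double-sum identity in an arbitrary real module. -/
lemma cb_aux_alg {T : Type} [Fintype T] {M : Type} [AddCommGroup M] [Module ℝ M]
    (f A : T → ℝ) (Dv : T → M) (hf1 : ∑ τ, f τ = 1) (hfne : ∀ τ, f τ ≠ 0)
    (h0 : ∑ τ, Dv τ = 0) :
    (1/4 : ℝ) • ∑ τ, ∑ τ', (f τ * f τ') •
        ((2 * (A τ - A τ')) • ((f τ)⁻¹ • Dv τ - (f τ')⁻¹ • Dv τ'))
      = ∑ τ, A τ • Dv τ := by
  set S : ℝ := ∑ τ, A τ * f τ with hS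
  have hterm : ∀ τ τ', (f τ * f τ') •
      ((2 * (A τ - A τ')) • ((f τ)⁻¹ • Dv τ - (f τ')⁻¹ • Dv τ'))
      = (2 * (A τ - A τ') * f τ') • Dv τ - (2 * (A τ - A τ') * f τ) • Dv τ' := by
    intro τ τ'
    rw [smul_sub, smul_sub, smul_smul, smul_smul, smul_smul, smul_smul]
    have hne := hfne τ
    have hne' := hfne τ'
    congr 2
    · field_simp
    · field_simp
  simp_rw [hterm, Finset.sum_sub_distrib]
  have h1 : ∀ τ, ∑ τ', (2 * (A τ - A τ') * f τ') • Dv τ = (2 * A τ - 2 * S) • Dv τ := by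
    intro τ
    rw [← Finset.sum_smul]
    congr 1
    calc ∑ τ', 2 * (A τ - A τ') * f τ'
        = ∑ τ', (2 * A τ * f τ' - 2 * (A τ' * f τ')) := by
          apply Finset.sum_congr rfl; intros; ring
      _ = 2 * A τ * (∑ τ', f τ') - 2 * ∑ τ', A τ' * f τ' := by
          rw [Finset.sum_sub_distrib, ← Finset.mul_sum, ← Finset.mul_sum]
      _ = 2 * A τ - 2 * S := by rw [hf1, hS]; ring
  have h2 : ∑ τ, ∑ τ', (2 * (A τ - A τ') * f τ) • Dv τ'
      = ∑ τ', (2 * S - 2 * A τ') • Dv τ' := by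
    rw [Finset.sum_comm]
    apply Finset.sum_congr rfl
    intro τ' _
    rw [← Finset.sum_smul]
    congr 1
    calc ∑ τ, 2 * (A τ - A τ') * f τ
        = ∑ τ, (2 * (A τ * f τ) - 2 * A τ' * f τ) := by
          apply Finset.sum_congr rfl; intros; ring
      _ = 2 * (∑ τ, A τ * f τ) - 2 * A τ' * (∑ τ, f τ) := by
          rw [Finset.sum_sub_distrib, ← Finset.mul_sum, ← Finset.mul_sum]
      _ = 2 * S - 2 * A τ' := by rw [hf1, hS]; ring
  simp_rw [h1, h2]
  have e1 : ∀ g : T → ℝ, ∀ c : ℝ,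
      ∑ τ, (g τ - c) • Dv τ = (∑ τ, g τ • Dv τ) - c • ∑ τ, Dv τ := by
    intro g c
    rw [Finset.smul_sum, ← Finset.sum_sub_distrib]
    apply Finset.sum_congr rfl
    intros; rw [sub_smul]
  have e2 := e1 (fun τ => 2 * A τ) (2 * S)
  have e3 : ∑ τ, (2 * S - 2 * A τ) • Dv τ
      = (2 * S) • (∑ τ, Dv τ) - ∑ τ, (2 * A τ) • Dv τ := by
    rw [Finset.smul_sum, ← Finset.sum_sub_distrib]
    apply Finset.sum_congr rfl
    intros; rw [sub_smul]
  simp only [e2, e3, h0, smul_zero, sub_zero, zero_sub]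
  have e4 : ∑ τ, (2 * A τ) • Dv τ = (2 : ℝ) • ∑ τ, A τ • Dv τ := by
    rw [Finset.smul_sum]
    apply Finset.sum_congr rfl
    intros; rw [smul_smul]
  rw [e4, sub_neg_eq_add]
  rw [show ((2:ℝ) • (∑ τ, A τ • Dv τ) + (2:ℝ) • (∑ τ, A τ • Dv τ))
      = (4:ℝ) • ∑ τ, A τ • Dv τ by rw [← add_smul]; norm_num]
  rw [smul_smul]
  norm_num

/-- Variational inference and contrastive balance (Theorem 3). -/
theorem vi_and_contrastive_balance
    {T X : Type} [Fintype T] [Fintype X] [Nonempty T] [Nonempty X] [DecidableEq X]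
    (term : T → X) (hsurj : Function.Surjective term)
    (d : ℕ)
    (pF : EuclideanSpace ℝ (Fin d) → T → ℝ)
    (hpF_pos : ∀ θ τ, 0 < pF θ τ)
    (hpF_sum : ∀ θ, ∑ τ, pF θ τ = 1)
    (hpF_diff : ∀ τ, Differentiable ℝ (fun θ => pF θ τ))
    (pB : T → ℝ) (hpB_pos : ∀ τ, 0 < pB τ)
    (hpB_sum : ∀ x, ∑ τ ∈ univ.filter (fun τ => term τ = x), pB τ = 1)
    (R : X → ℝ) (hR : ∀ x, 0 < R x)
    (q : T → ℝ) (hq : ∀ τ, q τ = R (term τ) * pB τ / ∑ x, R x)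
    (D : EuclideanSpace ℝ (Fin d) → ℝ)
    (hD : ∀ θ, D θ = ∑ τ, pF θ τ * Real.log (pF θ τ / q τ))
    (L : T → T → EuclideanSpace ℝ (Fin d) → ℝ)
    (hL : ∀ τ τ' θ, L τ τ' θ =
      (Real.log (pF θ τ / pB τ) - Real.log (pF θ τ' / pB τ')
        + Real.log (R (term τ') / R (term τ))) ^ 2) :
    ∀ θ, gradient D θ =
      (1 / 4 : ℝ) • ∑ τ, ∑ τ', (pF θ τ * pF θ τ') • gradient (L τ τ') θ := by
  intro θ
  classical
  set Dv : T → (EuclideanSpace ℝ (Fin d)) →L[ℝ] ℝ :=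
    fun τ => fderiv ℝ (fun θ => pF θ τ) θ with hDv
  have hZpos : (0:ℝ) < ∑ x, R x := Finset.sum_pos (fun x _ => hR x) univ_nonempty
  have hqpos : ∀ τ, 0 < q τ := by
    intro τ; rw [hq]
    exact div_pos (mul_pos (hR _) (hpB_pos _)) hZpos
  set A : T → ℝ := fun τ =>
    Real.log (pF θ τ) - Real.log (pB τ) - Real.log (R (term τ)) with hA
  have hf : ∀ τ, HasFDerivAt (fun θ => pF θ τ) (Dv τ) θ :=
    fun τ => ((hpF_diff τ) θ).hasFDerivAt
  have hsum0 : ∑ τ, Dv τ = 0 := by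
    have h1 : HasFDerivAt (fun θ => ∑ τ, pF θ τ) (∑ τ, Dv τ) θ :=
      HasFDerivAt.fun_sum (fun τ _ => hf τ)
    have heq : (fun θ => ∑ τ, pF θ τ) = fun _ => (1:ℝ) := funext hpF_sum
    rw [heq] at h1
    exact h1.unique (hasFDerivAt_const _ _)
  -- derivative of D
  have hterm : ∀ τ, HasFDerivAt (fun θ => pF θ τ * Real.log (pF θ τ / q τ))
      ((Real.log (pF θ τ) - Real.log (q τ) + 1) • Dv τ) θ := by
    intro τ
    have hlog : HasFDerivAt (fun θ => Real.log (pF θ τ)) ((pF θ τ)⁻¹ • Dv τ) θ :=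
      (hf τ).log (hpF_pos θ τ).ne'
    have hmul := (hf τ).fun_mul hlog
    have hc : HasFDerivAt (fun θ => pF θ τ * Real.log (q τ))
        (Real.log (q τ) • Dv τ) θ := by
      simpa [mul_comm] using (hf τ).const_mul (Real.log (q τ))
    have hsub := hmul.fun_sub hc
    have heq : (fun θ => pF θ τ * Real.log (pF θ τ) - pF θ τ * Real.log (q τ))
        = fun θ => pF θ τ * Real.log (pF θ τ / q τ) := by
      funext θ'
      rw [Real.log_div (hpF_pos θ' τ).ne' (hqpos τ).ne']
      ring
    rw [heq] at hsub
    refine hsub.congr_fderiv ?_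
    rw [smul_smul, mul_inv_cancel₀ (hpF_pos θ τ).ne']
    module
  have hDfd : HasFDerivAt D (∑ τ, A τ • Dv τ) θ := by
    have hsum : HasFDerivAt (fun θ => ∑ τ, pF θ τ * Real.log (pF θ τ / q τ))
        (∑ τ, (Real.log (pF θ τ) - Real.log (q τ) + 1) • Dv τ) θ :=
      HasFDerivAt.fun_sum (fun τ _ => hterm τ)
    have heqD : D = fun θ => ∑ τ, pF θ τ * Real.log (pF θ τ / q τ) := funext hD
    rw [← heqD] at hsum
    have hcoef : ∀ τ, Real.log (pF θ τ) - Real.log (q τ) + 1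
        = A τ + (Real.log (∑ x, R x) + 1) := by
      intro τ
      rw [hq, Real.log_div (mul_pos (hR _) (hpB_pos _)).ne' hZpos.ne',
        Real.log_mul (hR _).ne' (hpB_pos _).ne', hA]
      ring
    have hsums : (∑ τ, (Real.log (pF θ τ) - Real.log (q τ) + 1) • Dv τ)
        = ∑ τ, A τ • Dv τ := by
      rw [Finset.sum_congr rfl (fun τ _ => by rw [hcoef τ, add_smul]),
        Finset.sum_add_distrib, ← Finset.smul_sum, hsum0, smul_zero, add_zero]
    rwa [hsums] at hsum
  -- derivative of L τ τ'
  have hsval : ∀ τ τ', Real.log (pF θ τ / pB τ) - Real.log (pF θ τ' / pB τ')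
      + Real.log (R (term τ') / R (term τ)) = A τ - A τ' := by
    intro τ τ'
    rw [Real.log_div (hpF_pos θ τ).ne' (hpB_pos τ).ne',
      Real.log_div (hpF_pos θ τ').ne' (hpB_pos τ').ne',
      Real.log_div (hR _).ne' (hR _).ne', hA]
    ring
  have hLfd : ∀ τ τ', HasFDerivAt (L τ τ')
      ((2 * (A τ - A τ')) • ((pF θ τ)⁻¹ • Dv τ - (pF θ τ')⁻¹ • Dv τ')) θ := by
    intro τ τ'
    have hlg : ∀ σ : T, HasFDerivAt (fun θ => Real.log (pF θ σ / pB σ))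
        ((pF θ σ)⁻¹ • Dv σ) θ := by
      intro σ
      have heq : (fun θ => Real.log (pF θ σ / pB σ))
          = fun θ => Real.log (pF θ σ) - Real.log (pB σ) := by
        funext θ'
        rw [Real.log_div (hpF_pos θ' σ).ne' (hpB_pos σ).ne']
      rw [heq]
      simpa using ((hf σ).log (hpF_pos θ σ).ne').sub_const (Real.log (pB σ))
    have hs : HasFDerivAt (fun θ => Real.log (pF θ τ / pB τ)
        - Real.log (pF θ τ' / pB τ') + Real.log (R (term τ') / R (term τ)))
        ((pF θ τ)⁻¹ • Dv τ - (pF θ τ')⁻¹ • Dv τ') θ :=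
      ((hlg τ).sub (hlg τ')).add_const _
    have hsq := hs.fun_mul hs
    have heqL : L τ τ' = fun θ =>
        (Real.log (pF θ τ / pB τ) - Real.log (pF θ τ' / pB τ')
          + Real.log (R (term τ') / R (term τ)))
        * (Real.log (pF θ τ / pB τ) - Real.log (pF θ τ' / pB τ')
          + Real.log (R (term τ') / R (term τ))) := by
      funext θ'
      rw [hL, sq]
    rw [← heqL] at hsq
    refine hsq.congr_fderiv ?_
    rw [hsval τ τ']
    module
  -- conclude via gradient = toDual.symm ∘ fderiv
  have hgrad : ∀ g : EuclideanSpace ℝ (Fin d) → ℝ,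
      gradient g θ = (InnerProductSpace.toDual ℝ (EuclideanSpace ℝ (Fin d))).symm
        (fderiv ℝ g θ) := fun g => rfl
  rw [hgrad D, hDfd.fderiv]
  simp_rw [hgrad, fun τ τ' : T => (hLfd τ τ').fderiv]
  rw [show (∑ τ, ∑ τ', (pF θ τ * pF θ τ') •
      (InnerProductSpace.toDual ℝ (EuclideanSpace ℝ (Fin d))).symm
        ((2 * (A τ - A τ')) • ((pF θ τ)⁻¹ • Dv τ - (pF θ τ')⁻¹ • Dv τ')))
      = (InnerProductSpace.toDual ℝ (EuclideanSpace ℝ (Fin d))).symm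
        (∑ τ, ∑ τ', (pF θ τ * pF θ τ') •
          ((2 * (A τ - A τ')) • ((pF θ τ)⁻¹ • Dv τ - (pF θ τ')⁻¹ • Dv τ'))) by
    rw [map_sum]
    exact Finset.sum_congr rfl fun τ _ => by
      rw [map_sum]
      exact Finset.sum_congr rfl fun τ' _ => by simp only [map_smul]]
  rw [← map_smul]
  rw [cb_aux_alg (fun τ => pF θ τ) A Dv (hpF_sum θ) (fun τ => (hpF_pos θ τ).ne') hsum0]
end

section
/- Variational inference and contrastive balance with a parameterized backward policy (appendix theorem). Let d ∈ ℕ and let pB : ℝ^d → 𝒯 → ℝ satisfy, for every θ ∈ ℝ^d: pB(θ)(τ) > 0 for all τ, Σ_{τ : term(τ)=x} pB(θ)(τ) = 1 for every x ∈ 𝒳, and θ ↦ pB(θ)(τ) is differentiable for each τ. Let pF be a (fixed) forward policy and R a reward, and define the probability μ_θ(τ) = R(term(τ))·pB(θ)(τ)/Σ_{x∈𝒳} R(x) on 𝒯. Define D(θ) = Σ_{τ} μ_θ(τ)·log(μ_θ(τ)/pF(τ)) and L_CB(τ,τ',θ) = (log(pF(τ)/pB(θ)(τ)) − log(pF(τ')/pB(θ)(τ'))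 + log(R(term(τ'))/R(term(τ))))². Then for every θ ∈ ℝ^d, ∇_θ D(θ) = (1/4)·Σ_{(τ,τ')∈𝒯×𝒯} μ_θ(τ)·μ_θ(τ')·∇_θ L_CB(τ,τ',θ). -/
open Finset

set_option maxHeartbeats 1000000 in
/-- Variational inference and contrastive balance with a parameterized
backward policy (appendix theorem). -/
theorem vi_and_contrastive_balance_parameterized_backward
    {T X : Type} [Fintype T] [Fintype X] [Nonempty T] [Nonempty X] [DecidableEq X]
    (term : T → X) (hsurj : Function.Surjective term)
    (d : ℕ)
    (pB : EuclideanSpace ℝ (Fin d) → T → ℝ)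
    (hpB_pos : ∀ θ τ, 0 < pB θ τ)
    (hpB_sum : ∀ θ x, ∑ τ ∈ univ.filter (fun τ => term τ = x), pB θ τ = 1)
    (hpB_diff : ∀ τ, Differentiable ℝ (fun θ => pB θ τ))
    (pF : T → ℝ) (hpF_pos : ∀ τ, 0 < pF τ) (hpF_sum : ∑ τ, pF τ = 1)
    (R : X → ℝ) (hR : ∀ x, 0 < R x)
    (μ : EuclideanSpace ℝ (Fin d) → T → ℝ)
    (hμ : ∀ θ τ, μ θ τ = R (term τ) * pB θ τ / ∑ x, R x)
    (D : EuclideanSpace ℝ (Fin d) → ℝ)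
    (hD : ∀ θ, D θ = ∑ τ, μ θ τ * Real.log (μ θ τ / pF τ))
    (L : T → T → EuclideanSpace ℝ (Fin d) → ℝ)
    (hL : ∀ τ τ' θ, L τ τ' θ =
      (Real.log (pF τ / pB θ τ) - Real.log (pF τ' / pB θ τ')
        + Real.log (R (term τ') / R (term τ))) ^ 2) :
    ∀ θ, gradient D θ =
      (1 / 4 : ℝ) • ∑ τ, ∑ τ', (μ θ τ * μ θ τ') • gradient (L τ τ') θ := by
  intro θ
  set S : ℝ := ∑ x, R x with hSdef
  have hS : 0 < S := Finset.sum_pos (fun x _ => hR x) univ_nonempty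
  set B : T → (EuclideanSpace ℝ (Fin d) →L[ℝ] ℝ) :=
    fun τ => fderiv ℝ (fun θ' => pB θ' τ) θ with hBdef
  have hB : ∀ τ, HasFDerivAt (fun θ' => pB θ' τ) (B τ) θ :=
    fun τ => (hpB_diff τ θ).hasFDerivAt
  set V : T → (EuclideanSpace ℝ (Fin d) →L[ℝ] ℝ) :=
    fun τ => (R (term τ) / S) • B τ with hVdef
  set a : T → ℝ :=
    fun τ => Real.log (pF τ) - Real.log (pB θ τ) - Real.log (R (term τ)) with hadef
  set A : ℝ := ∑ τ, μ θ τ * a τ with hAdef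
  -- basic positivity facts
  have hcpos : ∀ τ, 0 < R (term τ) / S := fun τ => div_pos (hR _) hS
  have hcp : ∀ θ' τ, 0 < R (term τ) / S * pB θ' τ :=
    fun θ' τ => mul_pos (hcpos τ) (hpB_pos θ' τ)
  -- the normalization identity
  have hone : ∀ θ', ∑ τ, R (term τ) / S * pB θ' τ = 1 := by
    intro θ'
    rw [← Finset.sum_fiberwise univ term (fun τ => R (term τ) / S * pB θ' τ)]
    have h2 : ∀ x : X,
        ∑ τ ∈ univ.filter (fun τ => term τ = x), R (term τ) / S * pB θ' τ = R x / S := by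
      intro x
      rw [show ∑ τ ∈ univ.filter (fun τ => term τ = x), R (term τ) / S * pB θ' τ
          = ∑ τ ∈ univ.filter (fun τ => term τ = x), R x / S * pB θ' τ from
        Finset.sum_congr rfl fun τ hτ => by rw [(Finset.mem_filter.mp hτ).2],
        ← Finset.mul_sum, hpB_sum θ' x, mul_one]
    rw [Finset.sum_congr rfl fun x _ => h2 x, ← Finset.sum_div, ← hSdef, div_self hS.ne']
  have hμeq : ∀ θ' τ, μ θ' τ = R (term τ) / S * pB θ' τ := by
    intro θ' τ; rw [hμ θ' τ, mul_div_right_comm]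
  have hμpos : ∀ θ' τ, 0 < μ θ' τ := fun θ' τ => by rw [hμeq]; exact hcp θ' τ
  have hμsum : ∀ θ', ∑ τ, μ θ' τ = 1 := by
    intro θ'
    rw [Finset.sum_congr rfl fun τ _ => hμeq θ' τ]; exact hone θ'
  have hμβ : ∀ τ, μ θ τ * (pB θ τ)⁻¹ = R (term τ) / S := by
    intro τ
    rw [hμeq, mul_assoc, mul_inv_cancel₀ (hpB_pos θ τ).ne', mul_one]
  -- sum of V is zero
  have hV0 : ∑ τ, V τ = 0 := by
    have hg : HasFDerivAt (fun θ' => ∑ τ, R (term τ) / S * pB θ' τ) (∑ τ, V τ) θ :=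
      HasFDerivAt.fun_sum fun τ _ => (hB τ).const_mul _
    have hg1 : HasFDerivAt (fun _ : EuclideanSpace ℝ (Fin d) => (1 : ℝ)) (∑ τ, V τ) θ := by
      rwa [show (fun _ : EuclideanSpace ℝ (Fin d) => (1 : ℝ))
          = fun θ' => ∑ τ, R (term τ) / S * pB θ' τ from funext fun θ' => (hone θ').symm]
    exact hg1.unique (hasFDerivAt_const 1 θ)
  -- derivative of D
  have hDfun : D = fun θ' => ∑ τ, (R (term τ) / S * pB θ' τ) *
      (Real.log (R (term τ) / S * pB θ' τ) - Real.log (pF τ)) := by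
    funext θ'
    rw [hD]
    refine Finset.sum_congr rfl fun τ _ => ?_
    rw [hμeq, Real.log_div (hcp θ' τ).ne' (hpF_pos τ).ne']
  have hDd : HasFDerivAt D (∑ τ, (1 - Real.log S - a τ) • V τ) θ := by
    rw [hDfun]
    refine HasFDerivAt.fun_sum fun τ _ => ?_
    have h1 : HasFDerivAt (fun θ' => R (term τ) / S * pB θ' τ)
        ((R (term τ) / S) • B τ) θ := (hB τ).const_mul _
    have h3 : HasFDerivAt
        (fun θ' => Real.log (R (term τ) / S * pB θ' τ) - Real.log (pF τ))
        ((R (term τ) / S * pB θ τ)⁻¹ • ((R (term τ) / S) • B τ)) θ :=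
      (h1.log (hcp θ τ).ne').sub_const _
    have h4 := h1.mul h3
    refine h4.congr_fderiv ?_
    have hc : Real.log (R (term τ) / S * pB θ τ)
        = Real.log (R (term τ)) - Real.log S + Real.log (pB θ τ) := by
      rw [Real.log_mul (hcpos τ).ne' (hpB_pos θ τ).ne',
        Real.log_div (hR (term τ)).ne' hS.ne']
    have hpne := (hpB_pos θ τ).ne'
    have hRne := (hR (term τ)).ne'
    have hSne := hS.ne'
    match_scalars
    simp only [hc, hadef]
    field_simp
    ring
  -- derivative of L τ τ'
  have hLd : ∀ τ τ', HasFDerivAt (L τ τ')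
      ((2 * (a τ - a τ')) • ((pB θ τ')⁻¹ • B τ' - (pB θ τ)⁻¹ • B τ)) θ := by
    intro τ τ'
    have hfun : L τ τ' = fun θ' =>
        ((Real.log (pF τ) - Real.log (pB θ' τ))
          - (Real.log (pF τ') - Real.log (pB θ' τ'))
          + Real.log (R (term τ') / R (term τ))) ^ 2 := by
      funext θ'
      rw [hL, Real.log_div (hpF_pos τ).ne' (hpB_pos θ' τ).ne',
        Real.log_div (hpF_pos τ').ne' (hpB_pos θ' τ').ne']
    rw [hfun]
    simp only [pow_two]
    have h5 : ∀ σ, HasFDerivAt (fun θ' => Real.log (pF σ) - Real.log (pB θ' σ))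
        (-((pB θ σ)⁻¹ • B σ)) θ :=
      fun σ => ((hB σ).log (hpB_pos θ σ).ne').const_sub _
    have h7 : HasFDerivAt (fun θ' =>
        (Real.log (pF τ) - Real.log (pB θ' τ))
          - (Real.log (pF τ') - Real.log (pB θ' τ'))
          + Real.log (R (term τ') / R (term τ)))
        (-((pB θ τ)⁻¹ • B τ) - -((pB θ τ')⁻¹ • B τ')) θ :=
      ((h5 τ).sub (h5 τ')).add_const _
    have h8 := h7.mul h7
    refine h8.congr_fderiv ?_
    have he : (Real.log (pF τ) - Real.log (pB θ τ))
          - (Real.log (pF τ') - Real.log (pB θ τ'))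
          + Real.log (R (term τ') / R (term τ)) = a τ - a τ' := by
      rw [Real.log_div (hR (term τ')).ne' (hR (term τ)).ne', hadef]
      ring
    rw [he, neg_sub_neg]
    module
  have hLf : ∀ τ τ', fderiv ℝ (L τ τ') θ
      = (2 * (a τ - a τ')) • ((pB θ τ')⁻¹ • B τ' - (pB θ τ)⁻¹ • B τ) :=
    fun τ τ' => (hLd τ τ').fderiv
  -- the key finite-dimensional linear algebra identity
  have key : fderiv ℝ D θ
      = (1 / 4 : ℝ) • ∑ τ, ∑ τ', (μ θ τ * μ θ τ') • fderiv ℝ (L τ τ') θ := by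
    rw [hDd.fderiv]
    have step2 : (1 / 4 : ℝ) • ∑ τ, ∑ τ', (μ θ τ * μ θ τ') • fderiv ℝ (L τ τ') θ
        = ∑ τ, (A - a τ) • V τ := by
      have hsplit : ∑ τ, ∑ τ', (μ θ τ * μ θ τ') • fderiv ℝ (L τ τ') θ
          = (∑ τ, ∑ τ', (2 * μ θ τ * μ θ τ' * (a τ - a τ') * (pB θ τ')⁻¹) • B τ')
            - ∑ τ, ∑ τ', (2 * μ θ τ * μ θ τ' * (a τ - a τ') * (pB θ τ)⁻¹) • B τ := by
        rw [← Finset.sum_sub_distrib]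
        refine Finset.sum_congr rfl fun τ _ => ?_
        rw [← Finset.sum_sub_distrib]
        refine Finset.sum_congr rfl fun τ' _ => ?_
        rw [hLf]
        module
      have hsum_inner : ∀ σ, ∑ τ, μ θ τ * (a τ - a σ) = A - a σ := by
        intro σ
        rw [hAdef]
        rw [Finset.sum_congr rfl fun τ (_ : τ ∈ univ) =>
          (mul_sub (μ θ τ) (a τ) (a σ)), Finset.sum_sub_distrib,
          ← Finset.sum_mul, hμsum, one_mul]
      have hT1 : ∑ τ, ∑ τ', (2 * μ θ τ * μ θ τ' * (a τ - a τ') * (pB θ τ')⁻¹) • B τ'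
          = ∑ σ, (2 * (A - a σ)) • V σ := by
        rw [Finset.sum_comm]
        refine Finset.sum_congr rfl fun σ _ => ?_
        rw [← Finset.sum_smul]
        have : ∑ τ, 2 * μ θ τ * μ θ σ * (a τ - a σ) * (pB θ σ)⁻¹
            = (2 * (μ θ σ * (pB θ σ)⁻¹)) * ∑ τ, μ θ τ * (a τ - a σ) := by
          rw [Finset.mul_sum]
          exact Finset.sum_congr rfl fun τ _ => by ring
        rw [this, hsum_inner, hμβ, hVdef]
        rw [smul_smul]
        congr 1
        ring
      have hT2 : ∑ τ, ∑ τ', (2 * μ θ τ * μ θ τ' * (a τ - a τ') * (pB θ τ)⁻¹) • B τ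
          = ∑ σ, (2 * (a σ - A)) • V σ := by
        refine Finset.sum_congr rfl fun σ _ => ?_
        rw [← Finset.sum_smul]
        have : ∑ τ', 2 * μ θ σ * μ θ τ' * (a σ - a τ') * (pB θ σ)⁻¹
            = (2 * (μ θ σ * (pB θ σ)⁻¹)) * ∑ τ', μ θ τ' * (a τ' - a σ) * (-1) := by
          rw [Finset.mul_sum]
          exact Finset.sum_congr rfl fun τ' _ => by ring
        rw [this, ← Finset.sum_mul, hsum_inner, hμβ, hVdef]
        rw [smul_smul]
        congr 1
        ring
      rw [hsplit, hT1, hT2, ← Finset.sum_sub_distrib, Finset.smul_sum]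
      refine Finset.sum_congr rfl fun σ _ => ?_
      module
    rw [step2]
    -- finally compare with the derivative of D using hV0
    rw [← sub_eq_zero, ← Finset.sum_sub_distrib]
    have : ∑ τ, ((1 - Real.log S - a τ) • V τ - (A - a τ) • V τ)
        = (1 - Real.log S - A) • ∑ τ, V τ := by
      rw [Finset.smul_sum]
      exact Finset.sum_congr rfl fun τ _ => by module
    rw [this, hV0, smul_zero]
  -- conclude for gradients
  unfold gradient
  rw [key, map_smul]
  congr 1
  rw [map_sum]
  refine Finset.sum_congr rfl fun τ _ => ?_
  rw [map_sum]
  refine Finset.sum_congr rfl fun τ' _ => ?_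
  rw [map_smul]
end

section
/- Weighted aggregating balance condition, sufficiency (Theorem 1'). Let ω₁, …, ω_N > 0 be real weights. Suppose for each n = 1, …, N the trajectory balance condition holds for (pFₙ, pBₙ, Rₙ), and the weighted aggregating balance condition holds: ∏_{n=1}^N (pFₙ(τ)·pBₙ(τ')/(pBₙ(τ)·pFₙ(τ')))^{ωₙ} = pF(τ)·pB(τ')/(pB(τ)·pF(τ')) for all τ, τ' ∈ 𝒯. Then the marginal of pF over terminal states satisfies p_T(x) = (∏_{n=1}^N Rₙ(x)^{ωₙ})/(Σ_{y∈𝒳} ∏_{n=1}^N Rₙ(y)^{ωₙ}) for all x ∈ 𝒳. -/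
open Finset

/-- Weighted aggregating balance condition, sufficiency (Theorem 1'). -/
theorem weighted_aggregating_balance_sufficiency
    {T X : Type} [Fintype T] [Fintype X] [Nonempty T] [Nonempty X] [DecidableEq X]
    (term : T → X) (hsurj : Function.Surjective term)
    (N : ℕ) (ω : Fin N → ℝ) (hω : ∀ n, 0 < ω n)
    (pFn pBn : Fin N → T → ℝ) (Rn : Fin N → X → ℝ)
    (pF pB : T → ℝ)
    (hpFn_pos : ∀ n τ, 0 < pFn n τ) (hpFn_sum : ∀ n, ∑ τ, pFn n τ = 1)
    (hpBn_pos : ∀ n τ, 0 < pBn n τ)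
    (hpBn_sum : ∀ n x, ∑ τ ∈ univ.filter (fun τ => term τ = x), pBn n τ = 1)
    (hRn_pos : ∀ n x, 0 < Rn n x)
    (hpF_pos : ∀ τ, 0 < pF τ) (hpF_sum : ∑ τ, pF τ = 1)
    (hpB_pos : ∀ τ, 0 < pB τ)
    (hpB_sum : ∀ x, ∑ τ ∈ univ.filter (fun τ => term τ = x), pB τ = 1)
    (hTBn : ∀ n, ∃ Z > (0 : ℝ), ∀ τ, Z * pFn n τ = Rn n (term τ) * pBn n τ)
    (hAB : ∀ τ τ', ∏ n, (pFn n τ * pBn n τ' / (pBn n τ * pFn n τ')) ^ (ω n) =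
      pF τ * pB τ' / (pB τ * pF τ')) :
    ∀ x, ∑ τ ∈ univ.filter (fun τ => term τ = x), pF τ =
      (∏ n, Rn n x ^ (ω n)) / ∑ y, ∏ n, Rn n y ^ (ω n) := by
  set G : X → ℝ := fun x => ∏ n, Rn n x ^ (ω n) with hGdef
  have hGpos : ∀ x, 0 < G x := fun x =>
    Finset.prod_pos fun n _ => Real.rpow_pos_of_pos (hRn_pos n x) _
  obtain ⟨τ₀⟩ := (inferInstance : Nonempty T)
  -- ratio identity
  have hratio : ∀ τ, pF τ * pB τ₀ / (pB τ * pF τ₀) = G (term τ) / G (term τ₀) := by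
    intro τ
    rw [← hAB τ τ₀]
    have hterm : ∀ n, pFn n τ * pBn n τ₀ / (pBn n τ * pFn n τ₀)
        = Rn n (term τ) / Rn n (term τ₀) := by
      intro n
      obtain ⟨Z, hZ, hTB⟩ := hTBn n
      have h1 := hTB τ
      have h2 := hTB τ₀
      have hb := (hpBn_pos n τ).ne'
      have hb0 := (hpBn_pos n τ₀).ne'
      have hf0 := (hpFn_pos n τ₀).ne'
      have hr0 := (hRn_pos n (term τ₀)).ne'
      field_simp
      nlinarith [mul_pos hZ (hpFn_pos n τ), mul_pos hZ (hpFn_pos n τ₀),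
        mul_right_cancel₀ hZ.ne' (rfl : Z * Z = Z * Z)]
    calc ∏ n, (pFn n τ * pBn n τ₀ / (pBn n τ * pFn n τ₀)) ^ (ω n)
        = ∏ n, (Rn n (term τ) / Rn n (term τ₀)) ^ (ω n) := by
          exact Finset.prod_congr rfl fun n _ => by rw [hterm n]
      _ = ∏ n, Rn n (term τ) ^ (ω n) / Rn n (term τ₀) ^ (ω n) := by
          exact Finset.prod_congr rfl fun n _ =>
            Real.div_rpow (hRn_pos n (term τ)).le (hRn_pos n (term τ₀)).le (ω n)
      _ = G (term τ) / G (term τ₀) := by rw [Finset.prod_div_distrib]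
  set c : ℝ := pF τ₀ / (pB τ₀ * G (term τ₀)) with hcdef
  have hcpos : 0 < c := div_pos (hpF_pos τ₀) (mul_pos (hpB_pos τ₀) (hGpos _))
  have hkey : ∀ τ, pF τ = c * G (term τ) * pB τ := by
    intro τ
    have h := hratio τ
    have h1 : pB τ * pF τ₀ ≠ 0 := (mul_pos (hpB_pos τ) (hpF_pos τ₀)).ne'
    have h2 : G (term τ₀) ≠ 0 := (hGpos _).ne'
    rw [div_eq_div_iff h1 h2] at h
    have hne : pB τ₀ * G (term τ₀) ≠ 0 := (mul_pos (hpB_pos τ₀) (hGpos _)).ne'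
    rw [hcdef, div_mul_eq_mul_div, div_mul_eq_mul_div, eq_div_iff hne]
    linear_combination h
  -- fiber sums
  have hfib : ∀ x, ∑ τ ∈ univ.filter (fun τ => term τ = x), pF τ = c * G x := by
    intro x
    calc ∑ τ ∈ univ.filter (fun τ => term τ = x), pF τ
        = ∑ τ ∈ univ.filter (fun τ => term τ = x), c * G x * pB τ := by
          refine Finset.sum_congr rfl fun τ hτ => ?_
          rw [hkey τ, (Finset.mem_filter.1 hτ).2]
      _ = c * G x * ∑ τ ∈ univ.filter (fun τ => term τ = x), pB τ := by
          rw [Finset.mul_sum]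
      _ = c * G x := by rw [hpB_sum x, mul_one]
  have htot : c * ∑ y, G y = 1 := by
    have := Finset.sum_fiberwise (univ : Finset T) term pF
    rw [hpF_sum] at this
    calc c * ∑ y, G y = ∑ y, c * G y := by rw [Finset.mul_sum]
      _ = ∑ y, ∑ τ ∈ univ.filter (fun τ => term τ = y), pF τ := by
          exact Finset.sum_congr rfl fun y _ => (hfib y).symm
      _ = 1 := this
  have hSpos : 0 < ∑ y, G y := Finset.sum_pos (fun y _ => hGpos y) univ_nonempty
  intro x
  rw [hfib x, eq_div_iff hSpos.ne']
  calc c * G x * ∑ y, G y = G x * (c * ∑ y, G y) := by ring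
    _ = G x := by rw [htot, mul_one]
end

section
/- Weighted influence of local failures (Theorem 2'). Let ω₁, …, ω_N > 0 be real weights. For n = 1, …, N let πₙ(x) = Rₙ(x)/Σ_{y} Rₙ(y), and suppose there are αₙ ∈ (0,1) and βₙ > 0 with (1 − αₙ)·pBₙ(τ)·πₙ(term(τ)) ≤ pFₙ(τ) ≤ (1 + βₙ)·pBₙ(τ)·πₙ(term(τ)) for all τ ∈ 𝒯. Let pB be any backward policy. Define u(x) = ∏_{n=1}^N πₙ(x)^{ωₙ} and π(x) = u(x)/Σ_y u(y), and define v(x) = Σ_{τ : term(τ)=x} pB(τ)·∏_{n=1}^N (pFₙ(τ)/pBₙ(τ))^{ωₙ} and π̂(x) = v(x)/Σ_y v(y). Then the Jeffrey divergence satisfies D_J(π, π̂) := Σ_{x} π(x)·log(π(x)/π̂(x)) + Σ_{x} π̂(x)·log(π̂(x)/π(x)) ≤ Σ_{n=1}^N ωₙ·log((1 + βₙ)/(1 − αₙ)). -/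
open Finset

/-- Weighted influence of local failures (Theorem 2'). -/
theorem weighted_influence_of_local_failures
    {T X : Type} [Fintype T] [Fintype X] [Nonempty T] [Nonempty X] [DecidableEq X]
    (term : T → X) (hsurj : Function.Surjective term)
    (N : ℕ) (ω : Fin N → ℝ) (hω : ∀ n, 0 < ω n)
    (pFn pBn : Fin N → T → ℝ) (Rn : Fin N → X → ℝ)
    (hpFn_pos : ∀ n τ, 0 < pFn n τ) (hpFn_sum : ∀ n, ∑ τ, pFn n τ = 1)
    (hpBn_pos : ∀ n τ, 0 < pBn n τ)
    (hpBn_sum : ∀ n x, ∑ τ ∈ univ.filter (fun τ => term τ = x), pBn n τ = 1)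
    (hRn_pos : ∀ n x, 0 < Rn n x)
    (pB : T → ℝ) (hpB_pos : ∀ τ, 0 < pB τ)
    (hpB_sum : ∀ x, ∑ τ ∈ univ.filter (fun τ => term τ = x), pB τ = 1)
    (α β : Fin N → ℝ) (hα : ∀ n, α n ∈ Set.Ioo (0 : ℝ) 1) (hβ : ∀ n, 0 < β n)
    (piL : Fin N → X → ℝ) (hpiL : ∀ n x, piL n x = Rn n x / ∑ y, Rn n y)
    (hlower : ∀ n τ, (1 - α n) * (pBn n τ * piL n (term τ)) ≤ pFn n τ)
    (hupper : ∀ n τ, pFn n τ ≤ (1 + β n) * (pBn n τ * piL n (term τ)))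
    (u : X → ℝ) (hu : ∀ x, u x = ∏ n, piL n x ^ (ω n))
    (piG : X → ℝ) (hpiG : ∀ x, piG x = u x / ∑ y, u y)
    (v : X → ℝ)
    (hv : ∀ x, v x = ∑ τ ∈ univ.filter (fun τ => term τ = x),
      pB τ * ∏ n, (pFn n τ / pBn n τ) ^ (ω n))
    (piH : X → ℝ) (hpiH : ∀ x, piH x = v x / ∑ y, v y) :
    (∑ x, piG x * Real.log (piG x / piH x)) +
      (∑ x, piH x * Real.log (piH x / piG x)) ≤
        ∑ n, ω n * Real.log ((1 + β n) / (1 - α n)) := by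
  have hα0 : ∀ n, (0:ℝ) < 1 - α n := fun n => by have := (hα n).2; linarith
  have hβ0 : ∀ n, (0:ℝ) < 1 + β n := fun n => by have := hβ n; linarith
  have hpiL_pos : ∀ n x, 0 < piL n x := fun n x => by
    rw [hpiL]
    exact div_pos (hRn_pos n x) (Finset.sum_pos (fun y _ => hRn_pos n y) univ_nonempty)
  set A := ∏ n, (1 - α n) ^ (ω n) with hA
  set B := ∏ n, (1 + β n) ^ (ω n) with hB
  have hApos : 0 < A := Finset.prod_pos fun n _ => Real.rpow_pos_of_pos (hα0 n) _
  have hBpos : 0 < B := Finset.prod_pos fun n _ => Real.rpow_pos_of_pos (hβ0 n) _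
  have hu_pos : ∀ x, 0 < u x := fun x => by
    rw [hu]; exact Finset.prod_pos fun n _ => Real.rpow_pos_of_pos (hpiL_pos n x) _
  have hsumu : 0 < ∑ y, u y := Finset.sum_pos (fun y _ => hu_pos y) univ_nonempty
  have hratio_lo : ∀ τ, A * u (term τ) ≤ ∏ n, (pFn n τ / pBn n τ) ^ (ω n) := by
    intro τ
    have heq : A * u (term τ) = ∏ n, ((1 - α n) * piL n (term τ)) ^ (ω n) := by
      rw [hu, ← Finset.prod_mul_distrib]
      exact Finset.prod_congr rfl fun n _ =>
        (Real.mul_rpow (hα0 n).le (hpiL_pos n _).le).symm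
    rw [heq]
    apply Finset.prod_le_prod
    · intro n _
      exact Real.rpow_nonneg (mul_nonneg (hα0 n).le (hpiL_pos n _).le) _
    · intro n _
      apply Real.rpow_le_rpow (mul_nonneg (hα0 n).le (hpiL_pos n _).le) ?_ (hω n).le
      rw [le_div_iff₀ (hpBn_pos n τ)]
      calc (1 - α n) * piL n (term τ) * pBn n τ
          = (1 - α n) * (pBn n τ * piL n (term τ)) := by ring
        _ ≤ pFn n τ := hlower n τ
  have hratio_hi : ∀ τ, ∏ n, (pFn n τ / pBn n τ) ^ (ω n) ≤ B * u (term τ) := by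
    intro τ
    have heq : B * u (term τ) = ∏ n, ((1 + β n) * piL n (term τ)) ^ (ω n) := by
      rw [hu, ← Finset.prod_mul_distrib]
      exact Finset.prod_congr rfl fun n _ =>
        (Real.mul_rpow (hβ0 n).le (hpiL_pos n _).le).symm
    rw [heq]
    apply Finset.prod_le_prod
    · intro n _
      exact Real.rpow_nonneg (div_nonneg (hpFn_pos n τ).le (hpBn_pos n τ).le) _
    · intro n _
      apply Real.rpow_le_rpow (div_nonneg (hpFn_pos n τ).le (hpBn_pos n τ).le) ?_ (hω n).le
      rw [div_le_iff₀ (hpBn_pos n τ)]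
      calc pFn n τ ≤ (1 + β n) * (pBn n τ * piL n (term τ)) := hupper n τ
        _ = (1 + β n) * piL n (term τ) * pBn n τ := by ring
  have hv_lo : ∀ x, A * u x ≤ v x := by
    intro x
    rw [hv]
    calc A * u x = ∑ τ ∈ univ.filter (fun τ => term τ = x), pB τ * (A * u x) := by
          rw [← Finset.sum_mul, hpB_sum x, one_mul]
      _ ≤ _ := by
          apply Finset.sum_le_sum
          intro τ hτ
          have ht : term τ = x := (Finset.mem_filter.mp hτ).2
          apply mul_le_mul_of_nonneg_left _ (hpB_pos τ).le
          rw [← ht]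
          exact hratio_lo τ
  have hv_hi : ∀ x, v x ≤ B * u x := by
    intro x
    rw [hv]
    calc (∑ τ ∈ univ.filter (fun τ => term τ = x),
            pB τ * ∏ n, (pFn n τ / pBn n τ) ^ (ω n))
        ≤ ∑ τ ∈ univ.filter (fun τ => term τ = x), pB τ * (B * u x) := by
          apply Finset.sum_le_sum
          intro τ hτ
          have ht : term τ = x := (Finset.mem_filter.mp hτ).2
          apply mul_le_mul_of_nonneg_left _ (hpB_pos τ).le
          rw [← ht]
          exact hratio_hi τ
      _ = B * u x := by rw [← Finset.sum_mul, hpB_sum x, one_mul]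
  have hv_pos : ∀ x, 0 < v x := fun x =>
    lt_of_lt_of_le (mul_pos hApos (hu_pos x)) (hv_lo x)
  have hsumv : 0 < ∑ y, v y := Finset.sum_pos (fun y _ => hv_pos y) univ_nonempty
  have hG1 : ∑ x, piG x = 1 := by
    simp only [hpiG]
    rw [← Finset.sum_div, div_self hsumu.ne']
  have hH1 : ∑ x, piH x = 1 := by
    simp only [hpiH]
    rw [← Finset.sum_div, div_self hsumv.ne']
  set C := Real.log (∑ y, v y) - Real.log (∑ y, u y) with hC
  have hlogGH : ∀ x, Real.log (piG x / piH x) =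
      (Real.log (u x) - Real.log (v x)) + C := by
    intro x
    rw [hpiG, hpiH, Real.log_div (div_pos (hu_pos x) hsumu).ne'
        (div_pos (hv_pos x) hsumv).ne',
      Real.log_div (hu_pos x).ne' hsumu.ne', Real.log_div (hv_pos x).ne' hsumv.ne']
    ring
  have hlogHG : ∀ x, Real.log (piH x / piG x) =
      (Real.log (v x) - Real.log (u x)) - C := by
    intro x
    rw [hpiG, hpiH, Real.log_div (div_pos (hv_pos x) hsumv).ne'
        (div_pos (hu_pos x) hsumu).ne',
      Real.log_div (hu_pos x).ne' hsumu.ne', Real.log_div (hv_pos x).ne' hsumv.ne']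
    ring
  have hbd1 : ∀ x, Real.log (u x) - Real.log (v x) ≤ -Real.log A := by
    intro x
    have h := Real.log_le_log (mul_pos hApos (hu_pos x)) (hv_lo x)
    rw [Real.log_mul hApos.ne' (hu_pos x).ne'] at h
    linarith
  have hbd2 : ∀ x, Real.log (v x) - Real.log (u x) ≤ Real.log B := by
    intro x
    have h := Real.log_le_log (hv_pos x) (hv_hi x)
    rw [Real.log_mul hBpos.ne' (hu_pos x).ne'] at h
    linarith
  have h1 : ∑ x, piG x * Real.log (piG x / piH x) ≤ -Real.log A + C := by
    calc ∑ x, piG x * Real.log (piG x / piH x)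
        ≤ ∑ x, piG x * (-Real.log A + C) := by
          apply Finset.sum_le_sum
          intro x _
          rw [hlogGH x]
          exact mul_le_mul_of_nonneg_left (by have := hbd1 x; linarith)
            (le_of_lt (by rw [hpiG]; exact div_pos (hu_pos x) hsumu))
      _ = -Real.log A + C := by rw [← Finset.sum_mul, hG1, one_mul]
  have h2 : ∑ x, piH x * Real.log (piH x / piG x) ≤ Real.log B - C := by
    calc ∑ x, piH x * Real.log (piH x / piG x)
        ≤ ∑ x, piH x * (Real.log B - C) := by
          apply Finset.sum_le_sum
          intro x _
          rw [hlogHG x]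
          exact mul_le_mul_of_nonneg_left (by have := hbd2 x; linarith)
            (le_of_lt (by rw [hpiH]; exact div_pos (hv_pos x) hsumv))
      _ = Real.log B - C := by rw [← Finset.sum_mul, hH1, one_mul]
  have hlogA : Real.log A = ∑ n, ω n * Real.log (1 - α n) := by
    rw [hA, Real.log_prod (fun n _ => (Real.rpow_pos_of_pos (hα0 n) _).ne')]
    exact Finset.sum_congr rfl fun n _ => Real.log_rpow (hα0 n) _
  have hlogB : Real.log B = ∑ n, ω n * Real.log (1 + β n) := by
    rw [hB, Real.log_prod (fun n _ => (Real.rpow_pos_of_pos (hβ0 n) _).ne')]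
    exact Finset.sum_congr rfl fun n _ => Real.log_rpow (hβ0 n) _
  have hfinal : Real.log B - Real.log A =
      ∑ n, ω n * Real.log ((1 + β n) / (1 - α n)) := by
    rw [hlogA, hlogB, ← Finset.sum_sub_distrib]
    exact Finset.sum_congr rfl fun n _ => by
      rw [Real.log_div (hβ0 n).ne' (hα0 n).ne']; ring
  linarith [h1, h2, hfinal.ge, hfinal.le]
end
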